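/- arXiv:1504.03623 — 2 statements merged into one kernel-verified Lean document; each statement's English description precedes it below -/
import Mathlib

section
/- The indexed family 𝓕 = {F_n}_{n∈ℕ} with F_n = [0, 2^n] is PSD[O]-learnable and PSD[T]-learnable, but not PSD-learnable. -/
/-!
Common framework: indexed families of c.e. sets, enumerations (texts),
learning machines with run-time, membership-oracle machines, teachers,
and the learning criteria PRT/PSD/PMC/PCS with oracle/teacher variants.
-/

namespace TeachLearn

attribute [local instance] Classical.propDecidable

/-- The initial segment (finite string) of length `n` of the infinite sequence `f`. -/
def str (f : ℕ → ℕ) (n : ℕ) : List ℕ := (List.range n).map f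

/-- `f` is an enumeration (a text) of the set `A`: its set of values is exactly `A`. -/
def IsEnum (f : ℕ → ℕ) (A : Set ℕ) : Prop := Set.range f = A

/-- An indexed family: a uniformly computably enumerable sequence of nonempty
subsets of `ℕ`. -/
structure IndexedFamily where
  F : ℕ → Set ℕ
  nonempty : ∀ n, (F n).Nonempty
  uce : REPred fun p : ℕ × ℕ => p.1 ∈ F p.2

namespace IndexedFamily

/-- `A` is a member of the indexed family `𝓕`. -/
def Mem (𝓕 : IndexedFamily) (A : Set ℕ) : Prop := ∃ n, 𝓕.F n = A

/-- The minimal index of `A` in the indexed family `𝓕`. -/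
noncomputable def mi (𝓕 : IndexedFamily) (A : Set ℕ) : ℕ := sInf {n | 𝓕.F n = A}

end IndexedFamily

/-- A learning machine: a partial computable map from finite strings to
hypotheses, together with a (cumulative) run-time function.  The run-time is
defined exactly when the machine halts, dominates the length of the input read
as well as the size of the output produced, and is monotone along prefixes
(time is accumulated while reading an enumeration). -/
structure Machine where
  eval : List ℕ →. ℕ
  partrec : Partrec eval
  time : List ℕ →. ℕ
  time_dom : ∀ σ, (time σ).Dom ↔ (eval σ).Dom
  length_le_time : ∀ ⦃σ t⦄, t ∈ time σ → σ.length ≤ t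
  size_le_time : ∀ ⦃σ t h⦄, t ∈ time σ → h ∈ eval σ → Nat.size h ≤ t
  time_mono : ∀ ⦃σ τ s t⦄, σ <+: τ → s ∈ time σ → t ∈ time τ → s ≤ t

/-- A teacher: a computable, prefix-monotone map on finite strings whose
output consists of elements of its input. -/
structure Teacher where
  t : List ℕ → List ℕ
  computable : Computable t
  mono : ∀ ⦃σ τ⦄, σ <+: τ → t σ <+: t τ
  content_sub : ∀ ⦃σ x⦄, x ∈ t σ → x ∈ σ

/-- A learning machine with access to a membership oracle, modeled
interactively: `step (σ, ans)` is the machine's action on input string `σ`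
after having received the list `ans` of oracle answers so far; an even value
`2 * q` asks the oracle whether `q` belongs to the target, while an odd value
`2 * h + 1` halts the interaction with hypothesis `h`.  The run-time dominates
the length of the input read, the number of oracle queries asked, and the size
of the value produced, and is monotone (cumulative). -/
structure OMachine where
  step : List ℕ × List Bool →. ℕ
  partrec : Partrec step
  time : List ℕ × List Bool →. ℕ
  time_dom : ∀ x, (time x).Dom ↔ (step x).Dom
  length_le_time : ∀ ⦃x t⦄, t ∈ time x → x.1.length ≤ t
  queries_le_time : ∀ ⦃x t⦄, t ∈ time x → x.2.length ≤ t
  size_le_time : ∀ ⦃x t v⦄, t ∈ time x → v ∈ step x → Nat.size v ≤ t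
  time_mono : ∀ ⦃σ τ a b s t⦄, σ <+: τ → a <+: b →
    s ∈ time (σ, a) → t ∈ time (τ, b) → s ≤ t

namespace OMachine

/-- The answer lists reachable in the interaction of the machine `M` with the
membership oracle for `A` on the input string `σ`. -/
inductive Reach (M : OMachine) (A : Set ℕ) (σ : List ℕ) : List Bool → Prop
  | nil : Reach M A σ []
  | query {ans q} : Reach M A σ ans → (2 * q) ∈ M.step (σ, ans) →
      Reach M A σ (ans ++ [decide (q ∈ A)])

/-- `M.Out A σ h ans`: on input `σ`, interacting with the membership oracle
for `A`, the machine `M` receives the oracle answers `ans` and halts with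
hypothesis `h`. -/
def Out (M : OMachine) (A : Set ℕ) (σ : List ℕ) (h : ℕ) (ans : List Bool) : Prop :=
  M.Reach A σ ans ∧ (2 * h + 1) ∈ M.step (σ, ans)

/-- With oracle `A`, on the stage inputs `I`, the machine `M` outputs the
hypothesis `h` from stage `n` onwards. -/
def Settles (M : OMachine) (A : Set ℕ) (I : ℕ → List ℕ) (h n : ℕ) : Prop :=
  ∀ m, n ≤ m → ∃ ans, M.Out A (I m) h ans

end OMachine

/-- A teacher for the teacher-and-oracle model: it additionally has access to
the oracle answers received so far by the learner. -/
structure OTeacher where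
  t : List ℕ → List Bool → List ℕ
  computable : Computable₂ t
  mono : ∀ ⦃σ τ a b⦄, σ <+: τ → a <+: b → t σ a <+: t τ b
  content_sub : ∀ ⦃σ a x⦄, x ∈ t σ a → x ∈ σ

/-- On the stage inputs `I`, the machine `M` outputs the hypothesis `h` from
stage `n` onwards. -/
def Machine.Settles (M : Machine) (I : ℕ → List ℕ) (h n : ℕ) : Prop :=
  ∀ m, n ≤ m → M.eval (I m) = Part.some h

/-- Settling for the teacher-and-oracle model: `hist m` records the oracle
answers the learner received at stage `m - 1`, which the teacher sees at
stage `m`.  From stage `n` on, the learner outputs `h`. -/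
def OMachine.TOSettles (M : OMachine) (T : OTeacher) (A : Set ℕ) (f : ℕ → ℕ)
    (hist : ℕ → List Bool) (h n : ℕ) : Prop :=
  ∀ m, n ≤ m → M.Out A (T.t (str f m) (hist m)) h (hist (m + 1))

/-! ### Polynomial run-time (PRT) -/

/-- `M` converges to the hypothesis `h` on the stage inputs `I` within fewer
than `B` computation steps. -/
def Machine.PRTIdentifies (M : Machine) (I : ℕ → List ℕ) (h B : ℕ) : Prop :=
  ∃ n, M.Settles I h n ∧ ∃ t, t ∈ M.time (I n) ∧ t < B

/-- Oracle version of `Machine.PRTIdentifies`; the run-time bound also bounds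
the oracle use (by `queries_le_time`). -/
def OMachine.PRTIdentifies (M : OMachine) (A : Set ℕ) (I : ℕ → List ℕ) (h B : ℕ) : Prop :=
  ∃ n, M.Settles A I h n ∧
    ∃ ans t, M.Out A (I n) h ans ∧ t ∈ M.time (I n, ans) ∧ t < B

/-- `M` PRT-learns `𝓕` with polynomial bound `p`. -/
def PRTLearnsWith (M : Machine) (p : Polynomial ℕ) (𝓕 : IndexedFamily) : Prop :=
  ∀ A, 𝓕.Mem A → ∀ f, IsEnum f A →
    ∃ h, 𝓕.F h = A ∧ M.PRTIdentifies (str f) h (p.eval (𝓕.mi A))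

/-- `𝓕` is PRT-learnable. -/
def PRT (𝓕 : IndexedFamily) : Prop := ∃ M p, PRTLearnsWith M p 𝓕

/-- The learner-teacher pair `(M, T)` PRT-learns `𝓕` with polynomial bound `p`. -/
def PRTTLearnsWith (M : Machine) (T : Teacher) (p : Polynomial ℕ) (𝓕 : IndexedFamily) : Prop :=
  ∀ A, 𝓕.Mem A → ∀ f, IsEnum f A →
    ∃ h, 𝓕.F h = A ∧ M.PRTIdentifies (fun m => T.t (str f m)) h (p.eval (𝓕.mi A))

/-- `𝓕` is PRT[T]-learnable. -/
def PRTT (𝓕 : IndexedFamily) : Prop := ∃ M T p, PRTTLearnsWith M T p 𝓕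

/-- `𝓕` is PRT[O]-learnable. -/
def PRTO (𝓕 : IndexedFamily) : Prop :=
  ∃ (M : OMachine) (p : Polynomial ℕ), ∀ A, 𝓕.Mem A → ∀ f, IsEnum f A →
    ∃ h, 𝓕.F h = A ∧ M.PRTIdentifies A (str f) h (p.eval (𝓕.mi A))

/-- `𝓕` is PRT[T,O]-learnable. -/
def PRTTO (𝓕 : IndexedFamily) : Prop :=
  ∃ (M : OMachine) (T : OTeacher) (p : Polynomial ℕ),
    ∀ A, 𝓕.Mem A → ∀ f, IsEnum f A →
      ∃ h, 𝓕.F h = A ∧ ∃ hist : ℕ → List Bool, hist 0 = [] ∧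
        ∃ n, M.TOSettles T A f hist h n ∧
          ∃ t, t ∈ M.time (T.t (str f n) (hist n), hist (n + 1)) ∧ t < p.eval (𝓕.mi A)

/-! ### Polynomial size dataset (PSD) -/

/-- `M` converges to `h` on an initial stage whose input contains fewer than
`B` distinct elements. -/
def Machine.PSDIdentifies (M : Machine) (I : ℕ → List ℕ) (h B : ℕ) : Prop :=
  ∃ n, M.Settles I h n ∧ (I n).toFinset.card < B

/-- Oracle version of `Machine.PSDIdentifies`; the oracle use is also bounded. -/
def OMachine.PSDIdentifies (M : OMachine) (A : Set ℕ) (I : ℕ → List ℕ) (h B : ℕ) : Prop :=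
  ∃ n, M.Settles A I h n ∧ (I n).toFinset.card < B ∧
    ∃ ans, M.Out A (I n) h ans ∧ ans.length ≤ B

/-- `𝓕` is PSD-learnable. -/
def PSD (𝓕 : IndexedFamily) : Prop :=
  ∃ (M : Machine) (p : Polynomial ℕ), ∀ A, 𝓕.Mem A → ∀ f, IsEnum f A →
    ∃ h, 𝓕.F h = A ∧ M.PSDIdentifies (str f) h (p.eval (𝓕.mi A))

/-- `𝓕` is PSD[T]-learnable. -/
def PSDT (𝓕 : IndexedFamily) : Prop :=
  ∃ (M : Machine) (T : Teacher) (p : Polynomial ℕ), ∀ A, 𝓕.Mem A → ∀ f, IsEnum f A →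
    ∃ h, 𝓕.F h = A ∧ M.PSDIdentifies (fun m => T.t (str f m)) h (p.eval (𝓕.mi A))

/-- `𝓕` is PSD[O]-learnable. -/
def PSDO (𝓕 : IndexedFamily) : Prop :=
  ∃ (M : OMachine) (p : Polynomial ℕ), ∀ A, 𝓕.Mem A → ∀ f, IsEnum f A →
    ∃ h, 𝓕.F h = A ∧ M.PSDIdentifies A (str f) h (p.eval (𝓕.mi A))

/-- `𝓕` is PSD[T,O]-learnable. -/
def PSDTO (𝓕 : IndexedFamily) : Prop :=
  ∃ (M : OMachine) (T : OTeacher) (p : Polynomial ℕ),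
    ∀ A, 𝓕.Mem A → ∀ f, IsEnum f A →
      ∃ h, 𝓕.F h = A ∧ ∃ hist : ℕ → List Bool, hist 0 = [] ∧
        ∃ n, M.TOSettles T A f hist h n ∧
          (T.t (str f n) (hist n)).toFinset.card < p.eval (𝓕.mi A) ∧
          (hist (n + 1)).length ≤ p.eval (𝓕.mi A)

/-! ### Polynomial mind-changes (PMC) -/

/-- The set of positions at which the hypothesis stream `g` changes its mind. -/
def MindChanges (g : ℕ → ℕ) : Set ℕ := {i | g i ≠ g (i + 1)}

/-- The hypothesis stream `g` changes its mind at most `B` times, and the only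
hypothesis appearing infinitely often in it is an index of `A` in `𝓕`. -/
def PMCCriterion (𝓕 : IndexedFamily) (A : Set ℕ) (g : ℕ → ℕ) (B : ℕ) : Prop :=
  (MindChanges g).Finite ∧ (MindChanges g).ncard ≤ B ∧
    ∀ h, {i | g i = h}.Infinite → 𝓕.F h = A

/-- `𝓕` is PMC-learnable. -/
def PMC (𝓕 : IndexedFamily) : Prop :=
  ∃ (M : Machine) (p : Polynomial ℕ), ∀ A, 𝓕.Mem A → ∀ f, IsEnum f A →
    ∃ g : ℕ → ℕ, (∀ m, M.eval (str f m) = Part.some (g m)) ∧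
      PMCCriterion 𝓕 A g (p.eval (𝓕.mi A))

/-- `𝓕` is PMC[T]-learnable. -/
def PMCT (𝓕 : IndexedFamily) : Prop :=
  ∃ (M : Machine) (T : Teacher) (p : Polynomial ℕ), ∀ A, 𝓕.Mem A → ∀ f, IsEnum f A →
    ∃ g : ℕ → ℕ, (∀ m, M.eval (T.t (str f m)) = Part.some (g m)) ∧
      PMCCriterion 𝓕 A g (p.eval (𝓕.mi A))

/-- `𝓕` is PMC[O]-learnable. -/
def PMCO (𝓕 : IndexedFamily) : Prop :=
  ∃ (M : OMachine) (p : Polynomial ℕ), ∀ A, 𝓕.Mem A → ∀ f, IsEnum f A →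
    ∃ g : ℕ → ℕ,
      (∀ m, ∃ ans, M.Out A (str f m) (g m) ans ∧ ans.length ≤ p.eval (𝓕.mi A)) ∧
      PMCCriterion 𝓕 A g (p.eval (𝓕.mi A))

/-- `𝓕` is PMC[T,O]-learnable. -/
def PMCTO (𝓕 : IndexedFamily) : Prop :=
  ∃ (M : OMachine) (T : OTeacher) (p : Polynomial ℕ),
    ∀ A, 𝓕.Mem A → ∀ f, IsEnum f A →
      ∃ hist : ℕ → List Bool, hist 0 = [] ∧
        ∃ g : ℕ → ℕ,
          (∀ m, M.Out A (T.t (str f m) (hist m)) (g m) (hist (m + 1)) ∧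
            (hist (m + 1)).length ≤ p.eval (𝓕.mi A)) ∧
          PMCCriterion 𝓕 A g (p.eval (𝓕.mi A))

/-! ### Polynomial size characteristic sample (PCS) -/

/-- `𝓕` is PCS-learnable: there are a machine, a polynomial bound and an
assignment of a characteristic sample to each member of `𝓕`. -/
def PCS (𝓕 : IndexedFamily) : Prop :=
  ∃ (M : Machine) (p : Polynomial ℕ) (S : Set ℕ → Finset ℕ),
    ∀ A, 𝓕.Mem A → ↑(S A) ⊆ A ∧ (S A).card < p.eval (𝓕.mi A) ∧
      ∃ e, 𝓕.F e = A ∧ ∀ f, IsEnum f A → ∀ n, (∀ x ∈ S A, x ∈ str f n) →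
        M.eval (str f n) = Part.some e

/-- `𝓕` is PCS[O]-learnable. -/
def PCSO (𝓕 : IndexedFamily) : Prop :=
  ∃ (M : OMachine) (p : Polynomial ℕ) (S : Set ℕ → Finset ℕ),
    ∀ A, 𝓕.Mem A → ↑(S A) ⊆ A ∧ (S A).card < p.eval (𝓕.mi A) ∧
      ∃ e, 𝓕.F e = A ∧ ∀ f, IsEnum f A → ∀ n, (∀ x ∈ S A, x ∈ str f n) →
        ∃ ans, M.Out A (str f n) e ans ∧ ans.length ≤ p.eval (𝓕.mi A)

/-- `𝓕` is PCS[T]-learnable: the characteristic sample must eventually appear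
in the teacher's output stream, after which the learner locks onto a correct
index. -/
def PCST (𝓕 : IndexedFamily) : Prop :=
  ∃ (M : Machine) (T : Teacher) (p : Polynomial ℕ) (S : Set ℕ → Finset ℕ),
    ∀ A, 𝓕.Mem A → ↑(S A) ⊆ A ∧ (S A).card < p.eval (𝓕.mi A) ∧
      ∃ e, 𝓕.F e = A ∧ ∀ f, IsEnum f A →
        (∃ n, ∀ x ∈ S A, x ∈ T.t (str f n)) ∧
        ∀ n, (∀ x ∈ S A, x ∈ T.t (str f n)) → M.eval (T.t (str f n)) = Part.some e

/-- `𝓕` is PCS[T,O]-learnable. -/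
def PCSTO (𝓕 : IndexedFamily) : Prop :=
  ∃ (M : OMachine) (T : OTeacher) (p : Polynomial ℕ) (S : Set ℕ → Finset ℕ),
    ∀ A, 𝓕.Mem A → ↑(S A) ⊆ A ∧ (S A).card < p.eval (𝓕.mi A) ∧
      ∃ e, 𝓕.F e = A ∧ ∀ f, IsEnum f A →
        ∃ hist : ℕ → List Bool, hist 0 = [] ∧
          (∃ n, ∀ x ∈ S A, x ∈ T.t (str f n) (hist n)) ∧
          ∀ n, (∀ x ∈ S A, x ∈ T.t (str f n) (hist n)) →
            M.Out A (T.t (str f n) (hist n)) e (hist (n + 1)) ∧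
            (hist (n + 1)).length ≤ p.eval (𝓕.mi A)


section Stmt8Aux

open Polynomial in
private lemma eval_XC2 (n : ℕ) : (Polynomial.X + Polynomial.C 2 : Polynomial ℕ).eval n = n + 2 := by
  simp

private lemma size_le_self (x : ℕ) : Nat.size x ≤ x :=
  Nat.size_le.2 (Nat.lt_pow_self (n := x) one_lt_two)

private lemma ble_iff {a b : ℕ} : Nat.ble a b = true ↔ a ≤ b := by rw [Nat.ble_eq]

private lemma bledec {a b : ℕ} {i : Decidable (a ≤ b)} :
    @decide (a ≤ b) i = Nat.ble a b := by
  cases hb : Nat.ble a b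
  · exact decide_eq_false fun hle => by rw [← ble_iff] at hle; simp_all
  · exact decide_eq_true (ble_iff.1 hb)

/-! #### max of a list -/

private def maxl (l : List ℕ) : ℕ := l.foldr max 0

private lemma maxl_cons (a : ℕ) (l : List ℕ) : maxl (a :: l) = max a (maxl l) := rfl

private lemma maxl_append (l₁ l₂ : List ℕ) : maxl (l₁ ++ l₂) = max (maxl l₁) (maxl l₂) := by
  induction l₁ with
  | nil => simp [maxl]
  | cons a l ih => simp only [List.cons_append, maxl_cons, ih, max_assoc]

private lemma maxl_le {m : ℕ} {l : List ℕ} (h : ∀ x ∈ l, x ≤ m) : maxl l ≤ m := by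
  induction l with
  | nil => exact Nat.zero_le m
  | cons a l ih =>
    exact max_le (h a List.mem_cons_self) (ih fun x hx => h x (List.mem_cons_of_mem _ hx))

private lemma maxl_mono {l₁ l₂ : List ℕ} (h : l₁ <+: l₂) : maxl l₁ ≤ maxl l₂ := by
  obtain ⟨r, rfl⟩ := h; rw [maxl_append]; exact le_max_left _ _

private lemma primrec_maxl : Primrec maxl :=
  (Primrec.list_foldr Primrec.id (Primrec.const 0)
    ((Primrec.nat_max.comp (Primrec.fst.comp Primrec.snd)
      (Primrec.snd.comp Primrec.snd)).to₂)).of_eq fun _ => rfl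

private lemma primrec_pow : Primrec₂ ((· ^ ·) : ℕ → ℕ → ℕ) :=
  Primrec₂.unpaired'.1 Nat.Primrec.pow

private lemma primrec_ble : Primrec₂ Nat.ble :=
  Primrec.of_eq Primrec.nat_le.decide fun p => bledec

/-! #### integer log via findIdx -/

private def lg (m : ℕ) : ℕ := (List.range (m + 1)).findIdx fun k => Nat.ble m (2 ^ k)

private lemma lg_exists (m : ℕ) :
    ∃ x ∈ List.range (m + 1), Nat.ble m (2 ^ x) = true :=
  ⟨m, List.mem_range.2 (Nat.lt_succ_self m),
    ble_iff.2 (le_of_lt (Nat.lt_pow_self (n := m) one_lt_two))⟩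

private lemma lg_le (m : ℕ) : lg m ≤ m := by
  have := List.findIdx_lt_length_of_exists (lg_exists m)
  simpa [lg, Nat.lt_succ_iff] using this

private lemma lg_eq {v n : ℕ} (h1 : v ≤ 2 ^ n) (h2 : ∀ j < n, ¬ v ≤ 2 ^ j) : lg v = n := by
  have hn : n < (List.range (v + 1)).length := by
    rw [List.length_range]
    rcases Nat.eq_zero_or_pos n with rfl | hp
    · omega
    · have h3 := h2 (n - 1) (by omega)
      have h4 : n - 1 < 2 ^ (n - 1) := Nat.lt_pow_self one_lt_two
      omega
  rw [lg, List.findIdx_eq hn]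
  constructor
  · simpa [List.getElem_range] using ble_iff.2 h1
  · intro j hj
    simp only [List.getElem_range]
    have := h2 j hj
    rw [Bool.eq_false_iff]
    intro hb
    exact this (ble_iff.1 hb)

private lemma primrec_lg : Primrec lg :=
  Primrec.list_findIdx (Primrec.list_range.comp Primrec.succ)
    ((primrec_ble.comp Primrec.fst
      (primrec_pow.comp (Primrec.const 2) Primrec.snd)).to₂)

end Stmt8Aux

section Stmt8Teach

/-! #### the teacher -/

private def tstep (τ : List ℕ) (x : ℕ) : List ℕ :=
  bif Nat.ble (max (2 * maxl τ) 1) x then τ ++ [x] else τ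

private def teach (σ : List ℕ) : List ℕ := σ.foldl tstep []

private lemma tstep_pos {τ : List ℕ} {x : ℕ} (h : max (2 * maxl τ) 1 ≤ x) :
    tstep τ x = τ ++ [x] := by
  rw [tstep, ble_iff.2 h, cond_true]

private lemma tstep_neg {τ : List ℕ} {x : ℕ} (h : ¬ max (2 * maxl τ) 1 ≤ x) :
    tstep τ x = τ := by
  rw [tstep, Bool.eq_false_iff.2 (fun hb => h (ble_iff.1 hb)), cond_false]

private lemma tstep_prefix (τ : List ℕ) (x : ℕ) : τ <+: tstep τ x := by
  by_cases h : max (2 * maxl τ) 1 ≤ x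
  · rw [tstep_pos h]; exact ⟨[x], rfl⟩
  · rw [tstep_neg h]

private lemma foldl_tstep_prefix : ∀ (ρ τ : List ℕ), τ <+: List.foldl tstep τ ρ := by
  intro ρ
  induction ρ with
  | nil => exact fun τ => List.prefix_refl τ
  | cons x ρ ih => exact fun τ => (tstep_prefix τ x).trans (ih (tstep τ x))

private lemma teach_mono {σ τ : List ℕ} (h : σ <+: τ) : teach σ <+: teach τ := by
  obtain ⟨ρ, rfl⟩ := h
  rw [teach, teach, List.foldl_append]
  exact foldl_tstep_prefix ρ _

private lemma foldl_tstep_content : ∀ (ρ τ : List ℕ) (y : ℕ),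
    y ∈ List.foldl tstep τ ρ → y ∈ τ ∨ y ∈ ρ := by
  intro ρ
  induction ρ with
  | nil => exact fun τ y hy => Or.inl hy
  | cons x ρ ih =>
    intro τ y hy
    rcases ih (tstep τ x) y hy with hy' | hy'
    · by_cases h : max (2 * maxl τ) 1 ≤ x
      · rw [tstep_pos h, List.mem_append] at hy'
        rcases hy' with hy' | hy'
        · exact Or.inl hy'
        · simp at hy'; subst hy'; exact Or.inr List.mem_cons_self
      · rw [tstep_neg h] at hy'; exact Or.inl hy'
    · exact Or.inr (List.mem_cons_of_mem _ hy')

private lemma teach_content {σ : List ℕ} {y : ℕ} (h : y ∈ teach σ) : y ∈ σ := by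
  rcases foldl_tstep_content σ [] y h with h' | h'
  · simp at h'
  · exact h'

/-- the doubling invariant -/
private def GoodL (τ : List ℕ) : Prop := τ ≠ [] → 2 ^ τ.length ≤ 2 * maxl τ

private lemma good_tstep {τ : List ℕ} (hτ : GoodL τ) (x : ℕ) : GoodL (tstep τ x) := by
  by_cases h : max (2 * maxl τ) 1 ≤ x
  · rw [tstep_pos h]
    intro _
    have hx1 : 1 ≤ x := le_trans (le_max_right _ _) h
    have hx2 : 2 * maxl τ ≤ x := le_trans (le_max_left _ _) h
    have hsing : maxl [x] = x := by simp [maxl]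
    have hmx : x ≤ maxl (τ ++ [x]) := by
      rw [maxl_append, hsing]; exact le_max_right _ _
    rw [List.length_append, List.length_singleton]
    rcases eq_or_ne τ [] with rfl | hne
    · simp only [List.nil_append, List.length_nil, hsing]; omega
    · have hg := hτ hne
      have hp : 2 ^ (τ.length + 1) = 2 * 2 ^ τ.length := by rw [pow_succ]; ring
      omega
  · rw [tstep_neg h]; exact hτ

private lemma good_foldl : ∀ (ρ τ : List ℕ), GoodL τ → GoodL (List.foldl tstep τ ρ) := by
  intro ρ
  induction ρ with
  | nil => exact fun τ h => h
  | cons x ρ ih => exact fun τ h => ih _ (good_tstep h x)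

private lemma good_teach (σ : List ℕ) : GoodL (teach σ) :=
  good_foldl σ [] (fun h => absurd rfl h)

private lemma primrec_tstep : Primrec₂ tstep :=
  (Primrec.cond
    (primrec_ble.comp
      (Primrec.nat_max.comp
        (Primrec.nat_mul.comp (Primrec.const 2) (primrec_maxl.comp Primrec.fst))
        (Primrec.const 1))
      Primrec.snd)
    (Primrec.list_concat.comp Primrec.fst Primrec.snd)
    Primrec.fst).to₂

private lemma primrec_teach : Primrec teach :=
  (Primrec.list_foldl Primrec.id (Primrec.const ([] : List ℕ))
    ((primrec_tstep.comp (Primrec.fst.comp Primrec.snd)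
      (Primrec.snd.comp Primrec.snd)).to₂)).of_eq fun _ => rfl

end Stmt8Teach

section Stmt8Mach

/-! #### the PSD[T] learner -/

private def evalT (τ : List ℕ) : ℕ := lg (maxl τ)

private lemma primrec_evalT : Primrec evalT := primrec_lg.comp primrec_maxl

private def MT : Machine where
  eval := fun τ => Part.some (evalT τ)
  partrec := Partrec.of_eq primrec_evalT.to_comp.partrec fun _ => rfl
  time := fun τ => Part.some (τ.length + maxl τ + 1)
  time_dom := fun σ => by simp
  length_le_time := fun σ t ht => by
    rw [Part.mem_some_iff] at ht; omega
  size_le_time := fun σ t h ht hh => by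
    rw [Part.mem_some_iff] at ht hh
    subst ht hh
    have h1 : Nat.size (evalT σ) ≤ evalT σ := size_le_self _
    have h2 : evalT σ ≤ maxl σ := lg_le _
    omega
  time_mono := fun σ τ s t hp hs ht => by
    rw [Part.mem_some_iff] at hs ht
    subst hs ht
    have h1 := hp.length_le
    have h2 := maxl_mono hp
    omega

private def TT : Teacher where
  t := teach
  computable := primrec_teach.to_comp
  mono := fun _ _ h => teach_mono h
  content_sub := fun _ _ h => teach_content h

/-! #### the PSD[O] learner -/

private def og (x : List ℕ × List Bool) : ℕ :=
  bif x.2.reverse.head?.getD true then 2 * 2 ^ (x.2.length + 1) else 2 * (x.2.length - 1) + 1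

private lemma primrec_og : Primrec og :=
  Primrec.cond
    (Primrec.option_getD.comp
      (Primrec.list_head?.comp (Primrec.list_reverse.comp Primrec.snd))
      (Primrec.const true))
    (Primrec.nat_mul.comp (Primrec.const 2)
      (primrec_pow.comp (Primrec.const 2)
        (Primrec.succ.comp (Primrec.list_length.comp Primrec.snd))))
    (Primrec.succ.comp
      (Primrec.nat_mul.comp (Primrec.const 2)
        (Primrec.nat_sub.comp (Primrec.list_length.comp Primrec.snd) (Primrec.const 1))))

private lemma og_query (σ : List ℕ) (k : ℕ) :
    og (σ, List.replicate k true) = 2 * 2 ^ (k + 1) := by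
  rcases Nat.eq_zero_or_pos k with rfl | hk
  · simp [og]
  · have : (List.replicate k true).reverse = List.replicate k true := by
      simp [List.reverse_replicate]
    rw [og]
    simp only [this]
    rcases k with _ | k
    · omega
    · simp [List.replicate_succ]

private lemma og_halt (σ : List ℕ) (l : List Bool) :
    og (σ, l ++ [false]) = 2 * l.length + 1 := by
  rw [og]
  simp [List.reverse_append]

private def OM : OMachine where
  step := fun x => Part.some (og x)
  partrec := Partrec.of_eq primrec_og.to_comp.partrec fun _ => rfl
  time := fun x => Part.some (x.1.length + 2 * x.2.length + 3)
  time_dom := fun x => by simp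
  length_le_time := fun x t ht => by rw [Part.mem_some_iff] at ht; omega
  queries_le_time := fun x t ht => by rw [Part.mem_some_iff] at ht; omega
  size_le_time := fun x t v ht hv => by
    rw [Part.mem_some_iff] at ht hv
    subst ht hv
    rw [og]
    cases hb : (x.2.reverse.head?.getD true)
    · rw [cond_false]
      have h1 : Nat.size (2 * (x.2.length - 1) + 1) ≤ 2 * (x.2.length - 1) + 1 :=
        size_le_self _
      omega
    · rw [cond_true]
      have h2 : 2 * 2 ^ (x.2.length + 1) = 2 ^ (x.2.length + 2) := by
        rw [pow_succ]; ring
      rw [h2, Nat.size_pow]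
      omega
  time_mono := fun σ τ a b s t hp ha hs ht => by
    rw [Part.mem_some_iff] at hs ht
    subst hs ht
    have h1 := hp.length_le
    have h2 := ha.length_le
    show σ.length + 2 * a.length + 3 ≤ τ.length + 2 * b.length + 3
    omega

end Stmt8Mach

section Stmt8Main

private lemma om_reach (n : ℕ) (σ : List ℕ) :
    ∀ k, k ≤ n → OM.Reach (Set.Icc 0 (2 ^ n)) σ (List.replicate k true) := by
  intro k
  induction k with
  | zero => intro _; exact OMachine.Reach.nil
  | succ k ih =>
    intro hk
    have hq : (2 * 2 ^ (k + 1)) ∈ OM.step (σ, List.replicate k true) := by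
      show _ ∈ Part.some (og _)
      rw [Part.mem_some_iff, og_query]
    have hr := OMachine.Reach.query (ih (by omega)) hq
    have hd : ∀ i : Decidable ((2:ℕ) ^ (k + 1) ∈ Set.Icc 0 (2 ^ n)), @decide _ i = true :=
      fun _ => decide_eq_true (Set.mem_Icc.2 ⟨Nat.zero_le _, Nat.pow_le_pow_right (by omega) hk⟩)
    rw [hd] at hr
    rw [List.replicate_succ']
    exact hr

private lemma om_out {n : ℕ} {A : Set ℕ} (hA : A = Set.Icc 0 (2 ^ n)) (σ : List ℕ) :
    OM.Out A σ n (List.replicate n true ++ [false]) := by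
  subst hA
  constructor
  · have hq : (2 * 2 ^ (n + 1)) ∈ OM.step (σ, List.replicate n true) := by
      show _ ∈ Part.some (og _)
      rw [Part.mem_some_iff, og_query]
    have hr := OMachine.Reach.query (om_reach n σ n le_rfl) hq
    have hd : ∀ i : Decidable ((2:ℕ) ^ (n + 1) ∈ Set.Icc 0 (2 ^ n)), @decide _ i = false := by
      refine fun _ => decide_eq_false fun hm => ?_
      have h1 := (Set.mem_Icc.1 hm).2
      have h2 : (2:ℕ) ^ (n + 1) = 2 * 2 ^ n := by rw [pow_succ]; ring
      have h3 : 0 < (2:ℕ) ^ n := pow_pos (by omega) n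
      omega
    rwa [hd] at hr
  · show _ ∈ Part.some (og _)
    rw [Part.mem_some_iff, og_halt, List.length_replicate]

private lemma mi_icc (𝓕 : IndexedFamily) (hF : ∀ n, 𝓕.F n = Set.Icc 0 (2 ^ n)) (k : ℕ) :
    𝓕.mi (Set.Icc 0 (2 ^ k)) = k := by
  have hinj : ∀ m, (Set.Icc (0:ℕ) (2 ^ m)) = Set.Icc 0 (2 ^ k) → m = k := by
    intro m hm
    have h1 : (2:ℕ) ^ m ≤ 2 ^ k := by
      have hx : (2:ℕ) ^ m ∈ Set.Icc (0:ℕ) (2 ^ k) := by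
        rw [← hm]; exact Set.mem_Icc.2 ⟨Nat.zero_le _, le_rfl⟩
      exact (Set.mem_Icc.1 hx).2
    have h2 : (2:ℕ) ^ k ≤ 2 ^ m := by
      have hx : (2:ℕ) ^ k ∈ Set.Icc (0:ℕ) (2 ^ m) := by
        rw [hm]; exact Set.mem_Icc.2 ⟨Nat.zero_le _, le_rfl⟩
      exact (Set.mem_Icc.1 hx).2
    exact Nat.pow_right_injective (le_refl 2) (le_antisymm h1 h2)
  have hset : {n | 𝓕.F n = Set.Icc 0 (2 ^ k)} = {k} := by
    ext m
    simp only [Set.mem_setOf_eq, Set.mem_singleton_iff, hF]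
    exact ⟨hinj m, fun h => by rw [h]⟩
  rw [IndexedFamily.mi, hset, csInf_singleton]

private lemma str_succ (f : ℕ → ℕ) (m : ℕ) : str f (m + 1) = str f m ++ [f m] := by
  simp [str, List.range_succ]

private lemma str_prefix (f : ℕ → ℕ) {m m' : ℕ} (h : m ≤ m') : str f m <+: str f m' := by
  induction m', h using Nat.le_induction with
  | base => exact List.prefix_refl _
  | succ m' hm ih => exact ih.trans ⟨[f m'], (str_succ f m').symm⟩

private lemma mem_str {f : ℕ → ℕ} {x m : ℕ} (h : x ∈ str f m) : x ∈ Set.range f := by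
  simp only [str, List.mem_map, List.mem_range] at h
  obtain ⟨i, _, rfl⟩ := h
  exact ⟨i, rfl⟩

private lemma str_mem_of_lt {f : ℕ → ℕ} {i m : ℕ} (h : i < m) : f i ∈ str f m := by
  simp only [str, List.mem_map, List.mem_range]
  exact ⟨i, h, rfl⟩

private lemma str_congr {f g : ℕ → ℕ} {m : ℕ} (h : ∀ i < m, f i = g i) :
    str f m = str g m := by
  simp only [str]
  exact List.map_congr_left fun i hi => h i (List.mem_range.1 hi)

private lemma poly_le (p : Polynomial ℕ) : ∃ C k, ∀ x, p.eval x ≤ C * (x + 1) ^ k := by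
  induction p using Polynomial.induction_on' with
  | add p q hp hq =>
    obtain ⟨C1, k1, h1⟩ := hp
    obtain ⟨C2, k2, h2⟩ := hq
    refine ⟨C1 + C2, max k1 k2, fun x => ?_⟩
    rw [Polynomial.eval_add, add_mul]
    have e1 : C1 * (x + 1) ^ k1 ≤ C1 * (x + 1) ^ max k1 k2 :=
      Nat.mul_le_mul_left _ (Nat.pow_le_pow_right (by omega) (le_max_left _ _))
    have e2 : C2 * (x + 1) ^ k2 ≤ C2 * (x + 1) ^ max k1 k2 :=
      Nat.mul_le_mul_left _ (Nat.pow_le_pow_right (by omega) (le_max_right _ _))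
    have := h1 x; have := h2 x
    omega
  | monomial m a =>
    refine ⟨a, m, fun x => ?_⟩
    rw [Polynomial.eval_monomial]
    exact Nat.mul_le_mul_left _ (Nat.pow_le_pow_left (by omega) m)

private lemma exp_beats (C k : ℕ) : ∃ n : ℕ, C * (n + 2) ^ k < 2 ^ n := by
  have h := isLittleO_pow_const_const_pow_of_one_lt (R := ℝ) k (show (1:ℝ) < 2 by norm_num)
  have hc : (0:ℝ) < 1 / (4 * (C + 1)) := by positivity
  have h2 := h.def hc
  rw [Filter.eventually_atTop] at h2
  obtain ⟨N, hN⟩ := h2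
  refine ⟨N, ?_⟩
  have hb := hN (N + 2) (by omega)
  rw [Real.norm_eq_abs, Real.norm_eq_abs, abs_of_nonneg (by positivity),
    abs_of_nonneg (by positivity)] at hb
  have hR : (C : ℝ) * ((N + 2 : ℕ) : ℝ) ^ k < 2 ^ N := by
    calc (C : ℝ) * ((N + 2 : ℕ) : ℝ) ^ k
        ≤ C * (1 / (4 * (C + 1)) * 2 ^ (N + 2)) :=
          mul_le_mul_of_nonneg_left hb (by positivity)
      _ = (C / (C + 1)) * 2 ^ N := by
          field_simp
          ring
      _ < 1 * 2 ^ N := by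
          apply mul_lt_mul_of_pos_right _ (by positivity)
          rw [div_lt_one (by positivity)]
          linarith
      _ = 2 ^ N := one_mul _
  exact_mod_cast hR

end Stmt8Main

/-- The indexed family with `F_n = [0, 2^n]` is
PSD[O]-learnable and PSD[T]-learnable, but not PSD-learnable. -/
theorem stmt8 (𝓕 : IndexedFamily) (hF : ∀ n, 𝓕.F n = Set.Icc 0 (2 ^ n)) :
    PSDO 𝓕 ∧ PSDT 𝓕 ∧ ¬ PSD 𝓕 := by
  have hmi := mi_icc 𝓕 hF
  refine ⟨?_, ?_, ?_⟩
  · -- PSD[O]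
    refine ⟨OM, Polynomial.X + Polynomial.C 2, ?_⟩
    intro A hA f hf
    obtain ⟨k, hk⟩ := hA
    have hAI : A = Set.Icc 0 (2 ^ k) := by rw [← hk, hF]
    refine ⟨k, hk, 0, ?_, ?_, ?_⟩
    · intro m _
      exact ⟨_, om_out hAI (str f m)⟩
    · rw [hAI, hmi, eval_XC2]
      simp [str]
    · refine ⟨List.replicate k true ++ [false], om_out hAI _, ?_⟩
      rw [hAI, hmi, eval_XC2]
      simp only [List.length_append, List.length_replicate, List.length_cons,
        List.length_nil]
      omega
  · -- PSD[T]
    refine ⟨MT, TT, Polynomial.X + Polynomial.C 2, ?_⟩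
    intro A hA f hf
    obtain ⟨n, hn⟩ := hA
    have hAI : A = Set.Icc 0 (2 ^ n) := by rw [← hn, hF]
    have hub : ∀ m, maxl (teach (str f m)) ≤ 2 ^ n := by
      intro m
      refine maxl_le fun x hx => ?_
      have hx2 : x ∈ Set.range f := mem_str (teach_content hx)
      rw [hf, hAI] at hx2
      exact (Set.mem_Icc.1 hx2).2
    obtain ⟨i0, hi0⟩ : ∃ i, f i = 2 ^ n := by
      have hmem : (2:ℕ) ^ n ∈ Set.range f := by
        rw [hf, hAI]; exact Set.mem_Icc.2 ⟨Nat.zero_le _, le_rfl⟩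
      exact hmem
    have hlb0 : 2 ^ n < 2 * maxl (teach (str f (i0 + 1))) := by
      rw [str_succ, hi0]
      rw [show teach (str f i0 ++ [2 ^ n]) = tstep (teach (str f i0)) (2 ^ n) from by
        rw [teach, teach, List.foldl_append]; rfl]
      set τ0 := teach (str f i0)
      have hpos : 0 < (2:ℕ) ^ n := pow_pos (by omega) n
      by_cases hc : max (2 * maxl τ0) 1 ≤ 2 ^ n
      · rw [tstep_pos hc, maxl_append]
        have hone : maxl [2 ^ n] = 2 ^ n := by simp [maxl]
        rw [hone]
        have := le_max_right (maxl τ0) (2 ^ n)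
        omega
      · rw [tstep_neg hc]
        omega
    have hlb : ∀ m, i0 + 1 ≤ m → 2 ^ n < 2 * maxl (teach (str f m)) := by
      intro m hm
      have := maxl_mono (teach_mono (str_prefix f hm))
      omega
    refine ⟨n, hn, i0 + 1, ?_, ?_⟩
    · intro m hm
      show Part.some (evalT (teach (str f m))) = Part.some n
      congr 1
      refine lg_eq (hub m) fun j hj hle => ?_
      have h1 := hlb m hm
      have h2 : 2 * maxl (teach (str f m)) ≤ 2 ^ (j + 1) := by
        rw [pow_succ]; omega
      have h3 : (2:ℕ) ^ (j + 1) ≤ 2 ^ n := Nat.pow_le_pow_right (by omega) (by omega)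
      omega
    · rw [hAI, hmi, eval_XC2]
      set τ := teach (str f (i0 + 1))
      have hcard : τ.toFinset.card ≤ τ.length := List.toFinset_card_le τ
      have hlen : τ.length ≤ n + 1 := by
        rcases eq_or_ne τ [] with h | h
        · simp [h]
        · have hg : 2 ^ τ.length ≤ 2 * maxl τ := good_teach (str f (i0 + 1)) h
          have h2 : maxl τ ≤ 2 ^ n := hub (i0 + 1)
          have h3 : 2 ^ τ.length ≤ 2 ^ (n + 1) := by
            have : (2:ℕ) ^ (n + 1) = 2 * 2 ^ n := by rw [pow_succ]; ring
            omega
          exact (Nat.pow_le_pow_iff_right (by omega)).1 h3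
      show τ.toFinset.card < n + 2
      omega
  · -- not PSD
    rintro ⟨M, p, hM⟩
    have key : ∀ n : ℕ, 2 ^ n + 1 ≤ p.eval (n + 1) := by
      intro n
      have hpos : 0 < (2:ℕ) ^ n := pow_pos (by omega) n
      set fn : ℕ → ℕ := fun i => min i (2 ^ n) with hfn
      have henum : IsEnum fn (Set.Icc 0 (2 ^ n)) := by
        rw [IsEnum]
        ext x
        simp only [Set.mem_range, Set.mem_Icc]
        constructor
        · rintro ⟨i, rfl⟩
          exact ⟨Nat.zero_le _, min_le_right _ _⟩
        · rintro ⟨-, hx⟩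
          exact ⟨x, min_eq_left hx⟩
      obtain ⟨h1, hFh1, s1, hset1, hcard1⟩ :=
        hM (Set.Icc 0 (2 ^ n)) ⟨n, hF n⟩ fn henum
      set s' := max s1 (2 ^ n + 1) with hs'
      set f' : ℕ → ℕ := fun i => if i < s' then fn i else min (i - s') (2 ^ (n + 1))
        with hf'
      have hpow : (2:ℕ) ^ n ≤ 2 ^ (n + 1) := Nat.pow_le_pow_right (by omega) (by omega)
      have henum' : IsEnum f' (Set.Icc 0 (2 ^ (n + 1))) := by
        rw [IsEnum]
        ext x
        simp only [Set.mem_range, Set.mem_Icc]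
        constructor
        · rintro ⟨i, rfl⟩
          refine ⟨Nat.zero_le _, ?_⟩
          by_cases h : i < s'
          · simp only [hf', if_pos h]
            exact le_trans (min_le_right _ _) hpow
          · simp only [hf', if_neg h]
            exact min_le_right _ _
        · rintro ⟨-, hx⟩
          refine ⟨s' + x, ?_⟩
          simp only [hf', if_neg (by omega : ¬ s' + x < s')]
          rw [show s' + x - s' = x by omega]
          exact min_eq_left hx
      obtain ⟨h2, hFh2, s2, hset2, hcard2⟩ :=
        hM (Set.Icc 0 (2 ^ (n + 1))) ⟨n + 1, hF (n + 1)⟩ f' henum'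
      have hagree : ∀ m, m ≤ s' → str f' m = str fn m := fun m hm =>
        str_congr fun i hi => by simp only [hf', if_pos (show i < s' by omega)]
      rcases le_or_gt s2 s' with hcase | hcase
      · exfalso
        have e1 : M.eval (str f' s') = Part.some h2 := hset2 s' hcase
        have e2 : M.eval (str fn s') = Part.some h1 :=
          hset1 s' (le_trans (le_max_left _ _) le_rfl)
        rw [hagree s' le_rfl] at e1
        have heq : h1 = h2 := Part.some_inj.1 (e2.symm.trans e1)
        rw [heq, hFh2] at hFh1
        have hmem : (2:ℕ) ^ (n + 1) ∈ Set.Icc (0:ℕ) (2 ^ n) := by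
          rw [← hFh1]; exact Set.mem_Icc.2 ⟨Nat.zero_le _, le_rfl⟩
        have h4 := (Set.mem_Icc.1 hmem).2
        have h5 : (2:ℕ) ^ (n + 1) = 2 * 2 ^ n := by rw [pow_succ]; ring
        omega
      · have hsub : (str f' s').toFinset ⊆ (str f' s2).toFinset := by
          intro x hx
          rw [List.mem_toFinset] at hx ⊢
          exact (str_prefix f' (le_of_lt hcase)).subset hx
        have hicc : Finset.Icc 0 (2 ^ n) ⊆ (str f' s').toFinset := by
          intro x hx
          rw [Finset.mem_Icc] at hx
          rw [List.mem_toFinset, hagree s' le_rfl]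
          have hxlt : x < s' := by omega
          have hfx : fn x = x := min_eq_left (by omega)
          have := str_mem_of_lt (f := fn) hxlt
          rwa [hfx] at this
        have hc1 : 2 ^ n + 1 ≤ (str f' s').toFinset.card := by
          have hle := Finset.card_le_card hicc
          rw [Nat.card_Icc] at hle
          omega
        have hc2 := Finset.card_le_card hsub
        rw [hmi] at hcard2
        omega
    obtain ⟨C, k, hCk⟩ := poly_le p
    obtain ⟨n, hn⟩ := exp_beats C k
    have hk1 := key n
    have hk2 : p.eval (n + 1) ≤ C * (n + 2) ^ k := hCk (n + 1)
    omega


end TeachLearn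
end

section
/- There is an indexed family that is PSD[T]-learnable but not PSD[O]-learnable. -/
/-!
Common framework: indexed families of c.e. sets, enumerations (texts),
learning machines with run-time, membership-oracle machines, teachers,
and the learning criteria PRT/PSD/PMC/PCS with oracle/teacher variants.
-/

namespace TeachLearn

attribute [local instance] Classical.propDecidable

/-! ### Auxiliary constructions for Statement 9 -/

section Stmt9Aux

open Nat.Partrec (Code)
open Nat.Partrec.Code

/-- Step-bounded evaluation of the `k`-th partial computable function on input `0`. -/
def evn (s k : ℕ) : Option ℕ := evaln s (Denumerable.ofNat Code k) 0

/-- `htB k t` decides whether code `k` (on input `0`) halts at exactly "time" `t`. -/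
def htB (k t : ℕ) : Bool := (evn (t+1) k).isSome && !(evn t k).isSome

/-- Code `k` halts on input `0` at exactly time `t`. -/
def HtAt (k t : ℕ) : Prop := htB k t = true

lemma htAt_iff {k t} : HtAt k t ↔ ((evn (t+1) k).isSome = true ∧ (evn t k).isSome = false) := by
  simp [HtAt, htB]

/-- Code `k` halts on input `0`. -/
def Halts (k : ℕ) : Prop := ((Denumerable.ofNat Code k).eval 0).Dom

lemma htAt_unique {k t t'} (h : HtAt k t) (h' : HtAt k t') : t = t' := by
  rw [htAt_iff] at h h'
  rcases lt_trichotomy t t' with ht | ht | ht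
  · obtain ⟨x, hx⟩ := Option.isSome_iff_exists.1 h.1
    have h2 : x ∈ evn t' k := evaln_mono (Nat.succ_le_of_lt ht) hx
    rw [Option.mem_def] at h2
    simp [h2] at h'
  · exact ht
  · obtain ⟨x, hx⟩ := Option.isSome_iff_exists.1 h'.1
    have h2 : x ∈ evn t k := evaln_mono (Nat.succ_le_of_lt ht) hx
    rw [Option.mem_def] at h2
    simp [h2] at h

lemma htAt_halts {k t} (h : HtAt k t) : Halts k := by
  rw [htAt_iff] at h
  obtain ⟨x, hx⟩ := Option.isSome_iff_exists.1 h.1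
  exact Part.dom_iff_mem.2 ⟨x, evaln_sound hx⟩

lemma halts_iff {k} : Halts k ↔ ∃ t, HtAt k t := by
  constructor
  · intro h
    obtain ⟨x, hx⟩ := Part.dom_iff_mem.1 h
    obtain ⟨s, hs⟩ := evaln_complete.1 hx
    have hex : ∃ s, (evn s k).isSome = true :=
      ⟨s, by simp only [evn, Option.isSome_iff_exists]; exact ⟨x, hs⟩⟩
    have hs₀ : (evn (Nat.find hex) k).isSome = true := Nat.find_spec hex
    have hpos : Nat.find hex ≠ 0 := by
      intro h0
      rw [h0] at hs₀
      have he : evn 0 k = none := by simp [evn, evaln]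
      simp [he] at hs₀
    obtain ⟨t, hteq⟩ : ∃ t, Nat.find hex = t + 1 := ⟨Nat.find hex - 1, by omega⟩
    refine ⟨t, htAt_iff.2 ⟨by rw [← hteq]; exact hs₀, ?_⟩⟩
    have := Nat.find_min hex (m := t) (by omega)
    simpa using this
  · rintro ⟨t, ht⟩
    exact htAt_halts ht

/-- The set of even numbers. -/
def Evens : Set ℕ := {x | x % 2 = 0}

lemma mem_evens {x} : x ∈ Evens ↔ x % 2 = 0 := Iff.rfl

/-- The sets of our indexed family: `Evens`, and `Evens ∪ {2t+1}` where `t` is the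
halting time of code `k`. -/
def FamF : ℕ → Set ℕ
  | 0 => Evens
  | (k+1) => {x | x % 2 = 0 ∨ (x % 2 = 1 ∧ HtAt k (x / 2))}

lemma famF_succ_of_htAt {k t} (h : HtAt k t) : FamF (k+1) = Evens ∪ {2*t+1} := by
  ext x
  simp only [FamF, Set.mem_setOf_eq, Set.mem_union, Set.mem_singleton_iff, mem_evens]
  constructor
  · rintro (hx | ⟨hx, ht'⟩)
    · exact Or.inl hx
    · right
      have := htAt_unique ht' h
      omega
  · rintro (hx | rfl)
    · exact Or.inl hx
    · right
      refine ⟨by omega, ?_⟩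
      have h2 : (2*t+1)/2 = t := by omega
      rwa [h2]

lemma famF_succ_of_div {k} (h : ∀ t, ¬ HtAt k t) : FamF (k+1) = Evens := by
  ext x
  simp only [FamF, Set.mem_setOf_eq, mem_evens]
  constructor
  · rintro (hx | ⟨_, ht⟩)
    · exact hx
    · exact absurd ht (h _)
  · exact fun hx => Or.inl hx

lemma odd_not_evens {t : ℕ} : (2*t+1) ∉ Evens := by
  simp only [mem_evens]
  omega

lemma evens_ne_union {t : ℕ} : Evens ≠ Evens ∪ {2*t+1} := by
  intro h
  have : (2*t+1) ∈ Evens := h ▸ Set.mem_union_right _ rfl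
  exact odd_not_evens this

lemma evens_decide (q : ℕ) : (decide (q ∈ Evens)) = (q % 2 == 0) := by
  by_cases h : q % 2 = 0 <;> simp [mem_evens, h]

lemma primrec_evn : Primrec₂ evn :=
  (primrec_evaln.comp
    (((Primrec.fst).pair ((Primrec.ofNat Code).comp Primrec.snd)).pair (Primrec.const 0))).to₂

lemma primrec_htB : Primrec₂ htB := by
  have e1 : Primrec fun p : ℕ × ℕ => (evn (p.2+1) p.1).isSome :=
    Primrec.option_isSome.comp (primrec_evn.comp (Primrec.succ.comp Primrec.snd) Primrec.fst)
  have e2 : Primrec fun p : ℕ × ℕ => !(evn p.2 p.1).isSome :=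
    (Primrec.cond (Primrec.option_isSome.comp (primrec_evn.comp Primrec.snd Primrec.fst))
      (Primrec.const false) (Primrec.const true)).of_eq fun p => by
        cases h : (evn p.2 p.1).isSome <;> simp [h]
  have h3 : Primrec fun p : ℕ × ℕ => htB p.1 p.2 :=
    (Primrec.cond e1 e2 (Primrec.const false)).of_eq fun p => by
      cases h : (evn (p.2+1) p.1).isSome <;> simp [htB, h]
  exact h3.to₂

/-- Boolean membership test for the family. -/
def famB : ℕ × ℕ → Bool := fun p =>
  (p.1 % 2 == 0) || (Nat.casesOn p.2 false fun k => (p.1 % 2 == 1) && htB k (p.1 / 2))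

lemma primrec_famB : Primrec famB := by
  have h1 : Primrec fun p : ℕ × ℕ => (p.1 % 2 == 0) :=
    Primrec.beq.comp ((Primrec.nat_mod).comp Primrec.fst (Primrec.const 2)) (Primrec.const 0)
  have hodd : Primrec fun p : ℕ × ℕ => (p.1 % 2 == 1) :=
    Primrec.beq.comp ((Primrec.nat_mod).comp Primrec.fst (Primrec.const 2)) (Primrec.const 1)
  have hht : Primrec fun p : (ℕ × ℕ) × ℕ => htB p.2 (p.1.1 / 2) :=
    primrec_htB.comp Primrec.snd
      ((Primrec.nat_div).comp (Primrec.fst.comp Primrec.fst) (Primrec.const 2))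
  have hand : Primrec fun p : (ℕ × ℕ) × ℕ => (p.1.1 % 2 == 1) && htB p.2 (p.1.1 / 2) :=
    (Primrec.cond (hodd.comp Primrec.fst) hht (Primrec.const false)).of_eq fun p => by
      cases h : (p.1.1 % 2 == 1) <;> simp [h]
  have h2 : Primrec fun p : ℕ × ℕ =>
      (Nat.casesOn p.2 false fun k => (p.1 % 2 == 1) && htB k (p.1 / 2) : Bool) :=
    Primrec.nat_casesOn Primrec.snd (Primrec.const false) hand.to₂
  exact (Primrec.cond h1 (Primrec.const true) h2).of_eq fun p => by
    cases h : (p.1 % 2 == 0) <;> simp [famB, h]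

lemma famB_iff (p : ℕ × ℕ) : p.1 ∈ FamF p.2 ↔ famB p = true := by
  obtain ⟨x, n⟩ := p
  cases n with
  | zero => simp [FamF, mem_evens, famB]
  | succ k =>
    simp only [FamF, Set.mem_setOf_eq, famB, Bool.or_eq_true, beq_iff_eq,
      Bool.and_eq_true]
    exact ⟨fun h => h.imp id (fun ⟨a, b⟩ => ⟨a, b⟩), fun h => h.imp id (fun ⟨a, b⟩ => ⟨a, b⟩)⟩

/-- The indexed family witnessing Statement 9. -/
def Fam : IndexedFamily where
  F := FamF
  nonempty := fun n => ⟨0, by cases n <;> simp [FamF, mem_evens]⟩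
  uce := by
    have hc : ComputablePred fun p : ℕ × ℕ => p.1 ∈ FamF p.2 := by
      rw [ComputablePred.computable_iff]
      exact ⟨famB, primrec_famB.to_comp, funext fun p => propext (famB_iff p)⟩
    exact hc.to_re

lemma mi_evens : Fam.mi Evens = 0 :=
  Nat.sInf_eq_zero.2 (Or.inl rfl)

end Stmt9Aux
section Stmt9Machine

open Nat.Partrec (Code)
open Nat.Partrec.Code

/-- A generic (noncomputable) run-time function for a machine with evaluation map `ev`. -/
noncomputable def mkTime (ev : List ℕ →. ℕ) : List ℕ →. ℕ := fun σ =>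
  Part.assert (ev σ).Dom fun _ => Part.some (σ.length +
    (Finset.range (σ.length + 1)).sup fun i =>
      if h : (ev (σ.take i)).Dom then ((ev (σ.take i)).get h).size else 0)

lemma mem_mkTime {ev : List ℕ →. ℕ} {σ : List ℕ} {t : ℕ} :
    t ∈ mkTime ev σ ↔ ∃ _h : (ev σ).Dom, t = σ.length +
      (Finset.range (σ.length + 1)).sup fun i =>
        if h : (ev (σ.take i)).Dom then ((ev (σ.take i)).get h).size else 0 := by
  simp only [mkTime, Part.mem_assert_iff, Part.mem_some_iff, eq_comm]

/-- Any partial computable evaluation map extends to a `Machine`. -/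
noncomputable def mkMachine (ev : List ℕ →. ℕ) (hev : Partrec ev) : Machine where
  eval := ev
  partrec := hev
  time := mkTime ev
  time_dom := fun σ => by
    constructor
    · intro h
      obtain ⟨t, ht⟩ := Part.dom_iff_mem.1 h
      obtain ⟨hd, -⟩ := mem_mkTime.1 ht
      exact hd
    · intro h
      exact Part.dom_iff_mem.2 ⟨_, mem_mkTime.2 ⟨h, rfl⟩⟩
  length_le_time := fun σ t ht => by
    obtain ⟨-, rfl⟩ := mem_mkTime.1 ht
    omega
  size_le_time := fun σ t h ht hh => by
    obtain ⟨hd, rfl⟩ := mem_mkTime.1 ht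
    have h1 : (if hq : (ev (σ.take σ.length)).Dom then ((ev (σ.take σ.length)).get hq).size else 0)
        = h.size := by
      rw [List.take_length]
      rw [dif_pos (Part.dom_iff_mem.2 ⟨h, hh⟩)]
      congr 1
      exact Part.get_eq_of_mem hh _
    have h2 : (if hq : (ev (σ.take σ.length)).Dom then ((ev (σ.take σ.length)).get hq).size else 0)
        ≤ (Finset.range (σ.length + 1)).sup fun i =>
          if hq : (ev (σ.take i)).Dom then ((ev (σ.take i)).get hq).size else 0 := by
      simpa using Finset.le_sup (f := fun i =>
          if hq : (ev (σ.take i)).Dom then ((ev (σ.take i)).get hq).size else 0)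
        (Finset.self_mem_range_succ σ.length)
    omega
  time_mono := fun σ τ s t hp hs ht => by
    obtain ⟨hds, rfl⟩ := mem_mkTime.1 hs
    obtain ⟨hdt, rfl⟩ := mem_mkTime.1 ht
    have hlen : σ.length ≤ τ.length := hp.length_le
    have hsup : ((Finset.range (σ.length + 1)).sup fun i =>
        if h : (ev (σ.take i)).Dom then ((ev (σ.take i)).get h).size else 0) ≤
        ((Finset.range (τ.length + 1)).sup fun i =>
        if h : (ev (τ.take i)).Dom then ((ev (τ.take i)).get h).size else 0) := by
      apply Finset.sup_le
      intro i hi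
      rw [Finset.mem_range] at hi
      have htake : σ.take i = τ.take i := by
        obtain ⟨r, rfl⟩ := hp
        rw [List.take_append_of_le_length (by omega)]
      rw [htake]
      simpa using Finset.le_sup (f := fun i =>
          if h : (ev (τ.take i)).Dom then ((ev (τ.take i)).get h).size else 0)
        (Finset.mem_range.2 (show i < τ.length + 1 by omega))
    omega

/-- The predicate used by the learner's unbounded search. -/
def srchB (σ : List ℕ) (n : ℕ) : Bool := (σ.length == 0) || htB n (σ.headI / 2)

/-- Output formatting for the learner. -/
def srchG (σ : List ℕ) (n : ℕ) : ℕ := bif σ.length == 0 then 0 else n + 1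

/-- The teacher-model learner's evaluation function: on the empty string output index `0`
(for `Evens`); otherwise search for the least code halting at time indicated by the first
datum. -/
def Mev : List ℕ →. ℕ := fun σ => (Nat.rfind fun n => Part.some (srchB σ n)).map (srchG σ)

lemma computable_srchB : Computable₂ srchB := by
  have h1 : Primrec fun p : List ℕ × ℕ => (p.1.length == 0) :=
    Primrec.beq.comp (Primrec.list_length.comp Primrec.fst) (Primrec.const 0)
  have h2 : Primrec fun p : List ℕ × ℕ => htB p.2 (p.1.headI / 2) :=
    primrec_htB.comp Primrec.snd
      (Primrec.nat_div.comp (Primrec.list_headI.comp Primrec.fst) (Primrec.const 2))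
  have h3 : Primrec fun p : List ℕ × ℕ => srchB p.1 p.2 :=
    (Primrec.cond h1 (Primrec.const true) h2).of_eq fun p => by
      cases h : (p.1.length == 0) <;> simp [srchB, h]
  exact h3.to₂.to_comp

lemma computable_srchG : Computable₂ srchG := by
  have h1 : Primrec fun p : List ℕ × ℕ => (p.1.length == 0) :=
    Primrec.beq.comp (Primrec.list_length.comp Primrec.fst) (Primrec.const 0)
  have h3 : Primrec fun p : List ℕ × ℕ => srchG p.1 p.2 :=
    Primrec.cond h1 (Primrec.const 0) (Primrec.succ.comp Primrec.snd)
  exact h3.to₂.to_comp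

lemma partrec_Mev : Partrec Mev := by
  have hrf : Partrec fun σ : List ℕ => Nat.rfind fun n => Part.some (srchB σ n) := by
    apply Partrec.rfind
    exact computable_srchB.partrec₂
  exact hrf.map computable_srchG

lemma Mev_nil : Mev [] = Part.some 0 := by
  apply Part.eq_some_iff.2
  apply (Part.mem_map_iff _).2
  refine ⟨0, ?_, rfl⟩
  apply Nat.mem_rfind.2
  refine ⟨?_, fun h => by omega⟩
  simp [srchB]

lemma Mev_odd {l : List ℕ} {t : ℕ} (hne : l ≠ []) (hhd : l.headI = 2*t+1)
    (hex : ∃ k, HtAt k t) : Mev l = Part.some (Nat.find hex + 1) := by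
  have hlen : (l.length == 0) = false := by
    simp [List.length_eq_zero_iff, hne]
  have hsB : ∀ n, srchB l n = htB n t := by
    intro n
    simp only [srchB, hlen, Bool.false_or, hhd]
    congr 1
    omega
  apply Part.eq_some_iff.2
  apply (Part.mem_map_iff _).2
  refine ⟨Nat.find hex, ?_, by simp [srchG, hlen]⟩
  apply Nat.mem_rfind.2
  constructor
  · rw [Part.mem_some_iff, hsB]
    exact (Nat.find_spec hex).symm
  · intro m hm
    rw [Part.mem_some_iff, hsB]
    have := Nat.find_min hex hm
    simp only [HtAt] at this
    simp [this]

end Stmt9Machine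
section Stmt9Teacher

/-- The teacher: pass on only the odd data. -/
def Tch : Teacher where
  t σ := σ.filter (fun x => x % 2 == 1)
  computable := by
    have hg : Primrec₂ fun (_ : List ℕ) (x : ℕ) =>
        bif (x % 2 == 1) then some x else none := by
      have hodd : Primrec fun p : List ℕ × ℕ => (p.2 % 2 == 1) :=
        Primrec.beq.comp (Primrec.nat_mod.comp Primrec.snd (Primrec.const 2)) (Primrec.const 1)
      exact (Primrec.cond hodd (Primrec.option_some.comp Primrec.snd)
        (Primrec.const none)).to₂
    have h := Primrec.listFilterMap Primrec.id hg
    refine (h.of_eq fun l => ?_).to_comp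
    induction l with
    | nil => rfl
    | cons a l ih =>
      simp only [id_eq] at ih ⊢
      rw [List.filterMap_cons, List.filter_cons]
      cases h : (a % 2 == 1) <;> simp [h, ih]
  mono := fun _ _ h => h.filter _
  content_sub := fun σ x hx => (List.mem_filter.1 hx).1

lemma tch_t_def (σ : List ℕ) : Tch.t σ = σ.filter (fun x => x % 2 == 1) := rfl

lemma mem_str_s9 {f : ℕ → ℕ} {m x : ℕ} : x ∈ str f m ↔ ∃ i < m, f i = x := by
  simp [str]

lemma str_subset_range {f : ℕ → ℕ} {m x : ℕ} (h : x ∈ str f m) : x ∈ Set.range f := by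
  obtain ⟨i, -, rfl⟩ := mem_str_s9.1 h
  exact ⟨i, rfl⟩

/-- The constructed family is PSD[T]-learnable. -/
theorem fam_PSDT : PSDT Fam := by
  classical
  refine ⟨mkMachine Mev partrec_Mev, Tch, Polynomial.X + Polynomial.C 1, ?_⟩
  intro A hA f hf
  have hpe : ∀ n : ℕ, (Polynomial.X + Polynomial.C 1).eval n = n + 1 := by
    intro n; simp
  by_cases hAe : A = Evens
  · subst hAe
    refine ⟨0, rfl, 0, ?_, ?_⟩
    · intro m _
      have hfil : Tch.t (str f m) = [] := by
        rw [tch_t_def]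
        apply List.filter_eq_nil_iff.2
        intro x hx
        have : x ∈ Evens := hf ▸ str_subset_range hx
        rw [mem_evens] at this
        simp [this]
      show Mev (Tch.t (str f m)) = Part.some 0
      rw [hfil, Mev_nil]
    · show (Tch.t (str f 0)).toFinset.card < _
      rw [hpe]
      have h0 : (Tch.t (str f 0)) = [] := by rw [tch_t_def]; rfl
      rw [h0]
      simp
  · obtain ⟨n, hn⟩ := hA
    cases n with
    | zero => exact absurd (show A = Evens from hn.symm) hAe
    | succ k =>
      by_cases hk : ∃ t, HtAt k t
      · obtain ⟨t, ht⟩ := hk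
        have hAt : A = Evens ∪ {2*t+1} := by
          rw [← hn]
          exact (famF_succ_of_htAt ht).symm ▸ rfl
        have hex : ∃ k', HtAt k' t := ⟨k, ht⟩
        refine ⟨Nat.find hex + 1, ?_, ?_⟩
        · show FamF (Nat.find hex + 1) = A
          rw [famF_succ_of_htAt (Nat.find_spec hex), hAt]
        · have hmi : 1 ≤ Fam.mi A := by
            rcases Nat.eq_zero_or_pos (Fam.mi A) with h0 | h1
            · exfalso
              have hne : {n | Fam.F n = A}.Nonempty := ⟨k+1, hn⟩
              have := Nat.sInf_eq_zero.1 h0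
              rcases this with h2 | h2
              · exact hAe h2.symm
              · exact absurd hne (by rw [h2]; exact Set.not_nonempty_empty)
            · exact h1
          have hdA : (2*t+1) ∈ A := by rw [hAt]; exact Set.mem_union_right _ rfl
          obtain ⟨i₀, hi₀⟩ : ∃ i, f i = 2*t+1 := by
            have : (2*t+1) ∈ Set.range f := hf.symm ▸ hdA
            exact this
          refine ⟨i₀ + 1, ?_, ?_⟩
          · intro m hm
            set L := Tch.t (str f m) with hL
            have hmem : ∀ x ∈ L, x = 2*t+1 := by
              intro x hx
              rw [hL, tch_t_def, List.mem_filter] at hx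
              have hxA : x ∈ A := hf ▸ str_subset_range hx.1
              have hodd : x % 2 = 1 := by simpa using hx.2
              rw [hAt] at hxA
              rcases hxA with hxe | hxd
              · rw [mem_evens] at hxe; omega
              · exact hxd
            have hdL : (2*t+1) ∈ L := by
              rw [hL, tch_t_def, List.mem_filter]
              constructor
              · exact mem_str_s9.2 ⟨i₀, by omega, hi₀⟩
              · simp
            have hne : L ≠ [] := fun h => by rw [h] at hdL; exact absurd hdL List.not_mem_nil
            have hhd : L.headI = 2*t+1 := by
              cases hLc : L with
              | nil => exact absurd hLc hne
              | cons a l' =>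
                simp only [List.headI]
                exact hmem a (by rw [hLc]; exact List.mem_cons_self)
            show Mev L = Part.some (Nat.find hex + 1)
            rw [Mev_odd hne hhd hex]
          · show (Tch.t (str f (i₀ + 1))).toFinset.card < _
            rw [hpe]
            have hsub : (Tch.t (str f (i₀+1))).toFinset ⊆ {2*t+1} := by
              intro x hx
              rw [List.mem_toFinset] at hx
              rw [Finset.mem_singleton]
              rw [tch_t_def, List.mem_filter] at hx
              have hxA : x ∈ A := hf ▸ str_subset_range hx.1
              have hodd : x % 2 = 1 := by simpa using hx.2
              rw [hAt] at hxA
              rcases hxA with hxe | hxd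
              · rw [mem_evens] at hxe; omega
              · exact hxd
            have := Finset.card_le_card hsub
            rw [Finset.card_singleton] at this
            omega
      · push_neg at hk
        have hn' : FamF (k+1) = A := hn
        rw [famF_succ_of_div hk] at hn'
        exact absurd hn'.symm hAe

end Stmt9Teacher
section Stmt9OMachine

namespace OMachine

variable {M : OMachine} {A A' : Set ℕ} {σ : List ℕ}

lemma reach_take {a : List Bool} (h : M.Reach A σ a) (i : ℕ) : M.Reach A σ (a.take i) := by
  induction h with
  | nil => simpa using (Reach.nil : M.Reach A σ [])
  | @query ans q hr hst ih =>
    rcases le_or_gt i ans.length with hle | hlt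
    · rw [List.take_append_of_le_length hle]
      exact ih
    · rw [List.take_of_length_le (by simp; omega)]
      exact Reach.query hr hst

lemma reach_eq_of_length {a b : List Bool} (ha : M.Reach A σ a) (hb : M.Reach A σ b)
    (hl : a.length = b.length) : a = b := by
  induction ha generalizing b with
  | nil =>
    cases hb with
    | nil => rfl
    | query hr hst => simp at hl
  | @query ans q hr hst ih =>
    cases hb with
    | nil => simp at hl
    | @query ans' q' hr' hst' =>
      have hlen : ans.length = ans'.length := by simpa using hl
      obtain rfl : ans = ans' := ih hr' hlen
      have : 2*q = 2*q' := Part.mem_unique hst hst'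
      obtain rfl : q = q' := by omega
      rfl

lemma reach_prefix_of_le {a b : List Bool} (ha : M.Reach A σ a) (hb : M.Reach A σ b)
    (hl : a.length ≤ b.length) : a <+: b := by
  have h1 : M.Reach A σ (b.take a.length) := reach_take hb _
  have h2 : a = b.take a.length := reach_eq_of_length ha h1 (by simp [List.length_take]; omega)
  rw [h2]
  exact List.take_prefix _ _

lemma reach_of_prefix {a b : List Bool} (h : M.Reach A σ b) (hp : a <+: b) :
    M.Reach A σ a := by
  rw [List.prefix_iff_eq_take.1 hp]
  exact reach_take h _

lemma reach_snoc_inv {a : List Bool} {x : Bool} (h : M.Reach A σ (a ++ [x])) :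
    M.Reach A σ a ∧ ∃ q, 2*q ∈ M.step (σ, a) ∧ x = decide (q ∈ A) := by
  generalize hc : a ++ [x] = c at h
  cases h with
  | nil => exact absurd hc (by simp)
  | @query ans q hr hst =>
    have hlen : a.length = ans.length := by
      have := congrArg List.length hc
      simpa using this
    obtain ⟨rfl, hx⟩ : a = ans ∧ x = decide (q ∈ A) := by
      constructor
      · exact (List.append_inj hc hlen).1
      · have h5 := (List.append_inj hc hlen).2
        simp only [List.cons.injEq, and_true] at h5
        exact h5
    exact ⟨hr, q, hst, hx⟩

lemma halt_reach_le {a b : List Bool} {h : ℕ} (hout : (2*h+1) ∈ M.step (σ, a))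
    (ha : M.Reach A σ a) (hb : M.Reach A σ b) : b.length ≤ a.length := by
  by_contra hlt
  push_neg at hlt
  have h1 : M.Reach A σ (b.take (a.length + 1)) := reach_take hb _
  have h2 : b.take (a.length + 1) = b.take a.length ++ [b[a.length]'(by omega)] := by
    rw [← List.take_concat_get (l := b) (i := a.length) (by omega), List.concat_eq_append]
  rw [h2] at h1
  obtain ⟨hr, q, hst, -⟩ := reach_snoc_inv h1
  have h3 : a = b.take a.length :=
    reach_eq_of_length ha hr (by simp [List.length_take]; omega)
  rw [← h3] at hst
  have := Part.mem_unique hout hst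
  omega

lemma out_unique {a a' : List Bool} {h h' : ℕ} (h1 : M.Out A σ h a) (h2 : M.Out A σ h' a') :
    h = h' ∧ a = a' := by
  obtain ⟨r1, s1⟩ := h1
  obtain ⟨r2, s2⟩ := h2
  have hle : a'.length ≤ a.length := halt_reach_le s1 r1 r2
  have hge : a.length ≤ a'.length := halt_reach_le s2 r2 r1
  obtain rfl : a = a' := reach_eq_of_length r1 r2 (by omega)
  have : 2*h+1 = 2*h'+1 := Part.mem_unique s1 s2
  exact ⟨by omega, rfl⟩

lemma reach_transfer {d : ℕ} {a : List Bool} (hAA' : ∀ x, x ≠ d → (x ∈ A ↔ x ∈ A'))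
    (h : M.Reach A σ a) :
    (∀ pre q, pre <+: a → pre ≠ a → (2*q) ∈ M.step (σ, pre) → q ≠ d) → M.Reach A' σ a := by
  induction h with
  | nil => exact fun _ => Reach.nil
  | @query ans q hr hst ih =>
    intro hnd
    have hq : q ≠ d := by
      refine hnd ans q (by simp) ?_ hst
      intro he
      have := congrArg List.length he
      simp at this
    have hdec : decide (q ∈ A) = decide (q ∈ A') := decide_eq_decide.2 (hAA' q hq)
    rw [hdec]
    refine Reach.query (ih ?_) hst
    intro pre q' hp hne hs
    refine hnd pre q' (hp.trans (by simp)) ?_ hs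
    intro he
    rw [he] at hp
    have := hp.length_le
    simp at this

lemma queries_diff {d : ℕ} {a a' : List Bool} {h h' : ℕ}
    (hAA' : ∀ x, x ≠ d → (x ∈ A ↔ x ∈ A'))
    (h1 : M.Out A σ h a) (h2 : M.Out A' σ h' a') (hne : h ≠ h') :
    ∃ pre, pre <+: a ∧ M.Reach A σ pre ∧ (2*d) ∈ M.step (σ, pre) := by
  by_contra hq
  push_neg at hq
  have htr : M.Out A' σ h a := by
    refine ⟨reach_transfer hAA' h1.1 ?_, h1.2⟩
    intro pre q hp hne' hs heq
    subst heq
    exact hq pre hp (reach_of_prefix h1.1 hp) hs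
  exact hne (out_unique htr h2).1

end OMachine

end Stmt9OMachine
section Stmt9Reduction

/-- The canonical enumeration of the even numbers. -/
def EStr (m : ℕ) : List ℕ := str (fun i => 2*i) m

/-- `magicB k q = true` iff the query `q` is the odd number coding the halting time of `k`. -/
def magicB (k q : ℕ) : Bool := (q % 2 == 1) && htB k (q / 2)

lemma magicB_halts {k q} (h : magicB k q = true) : Halts k := by
  simp only [magicB, Bool.and_eq_true] at h
  exact htAt_halts (h.2 : HtAt k (q / 2))

/-- One step of the simulation of machine `M` with the membership oracle for `Evens` on the
canonical enumeration of `Evens`, hunting for a "magic" query. -/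
def redF (M : OMachine) (B : ℕ → ℕ) (n₀ : ℕ) :
    ℕ × ℕ × List Bool →. Bool ⊕ (ℕ × ℕ × List Bool) :=
  fun s => (M.step (EStr s.2.1, s.2.2)).map fun v =>
    bif v % 2 == 1 then
      (bif Nat.ble (n₀ + B s.1) s.2.1 then Sum.inl false
       else Sum.inr (s.1, s.2.1 + 1, []))
    else bif magicB s.1 (v / 2) then Sum.inl true
    else Sum.inr (s.1, s.2.1, s.2.2 ++ [(v / 2) % 2 == 0])

section RedFSemantics

variable {M : OMachine} {B : ℕ → ℕ} {n₀ : ℕ}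

lemma redF_mem_inr_step {k m : ℕ} {ans : List Bool} {q : ℕ}
    (hst : (2*q) ∈ M.step (EStr m, ans)) (hmg : magicB k q = false) :
    Sum.inr (k, m, ans ++ [decide (q ∈ Evens)]) ∈ redF M B n₀ (k, m, ans) := by
  have h2 : ((2*q) % 2 == 1) = false := by simp
  have h3 : (2*q) / 2 = q := by omega
  apply (Part.mem_map_iff _).2
  refine ⟨2*q, hst, ?_⟩
  simp only [h2, h3, hmg, Bool.cond_false, evens_decide]

lemma redF_mem_inl_true {k m : ℕ} {ans : List Bool} {q : ℕ}
    (hst : (2*q) ∈ M.step (EStr m, ans)) (hmg : magicB k q = true) :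
    Sum.inl true ∈ redF M B n₀ (k, m, ans) := by
  have h2 : ((2*q) % 2 == 1) = false := by simp
  have h3 : (2*q) / 2 = q := by omega
  apply (Part.mem_map_iff _).2
  refine ⟨2*q, hst, ?_⟩
  simp only [h2, h3, hmg, Bool.cond_false, Bool.cond_true]

lemma redF_mem_halt_stop {k m : ℕ} {ans : List Bool} {h : ℕ}
    (hst : (2*h+1) ∈ M.step (EStr m, ans)) (hm : n₀ + B k ≤ m) :
    Sum.inl false ∈ redF M B n₀ (k, m, ans) := by
  have h2 : ((2*h+1) % 2 == 1) = true := by simp only [beq_iff_eq]; omega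
  have h3 : Nat.ble (n₀ + B k) m = true := by simpa using hm
  apply (Part.mem_map_iff _).2
  refine ⟨2*h+1, hst, ?_⟩
  simp only [h2, h3, Bool.cond_true]

lemma redF_mem_halt_next {k m : ℕ} {ans : List Bool} {h : ℕ}
    (hst : (2*h+1) ∈ M.step (EStr m, ans)) (hm : m < n₀ + B k) :
    Sum.inr (k, m + 1, ([] : List Bool)) ∈ redF M B n₀ (k, m, ans) := by
  have h2 : ((2*h+1) % 2 == 1) = true := by simp only [beq_iff_eq]; omega
  have h3 : Nat.ble (n₀ + B k) m = false := by
    cases hble : Nat.ble (n₀ + B k) m with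
    | false => rfl
    | true => exact absurd (show n₀ + B k ≤ m by simpa using hble) (by omega)
  apply (Part.mem_map_iff _).2
  refine ⟨2*h+1, hst, ?_⟩
  simp only [h2, h3, Bool.cond_true, Bool.cond_false]

lemma redF_walk {k m : ℕ} {c : List Bool} (hc : M.Reach Evens (EStr m) c)
    (hnm : ∀ pre q, pre <+: c → pre ≠ c → (2*q) ∈ M.step (EStr m, pre) → magicB k q = false) :
    (redF M B n₀).fix (k, m, ([] : List Bool)) = (redF M B n₀).fix (k, m, c) := by
  induction hc with
  | nil => rfl
  | @query ans q hr hst ih =>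
    have hmg : magicB k q = false := by
      refine hnm ans q (by simp) ?_ hst
      intro he
      have := congrArg List.length he
      simp at this
    have hih : (redF M B n₀).fix (k, m, ([] : List Bool)) = (redF M B n₀).fix (k, m, ans) := by
      refine ih ?_
      intro pre q' hp hne hs
      refine hnm pre q' (hp.trans (by simp)) ?_ hs
      intro he
      rw [he] at hp
      have := hp.length_le
      simp at this
    rw [hih, PFun.fix_fwd_eq (redF_mem_inr_step hst hmg)]

lemma redF_detect {k m : ℕ} {pre : List Bool} {q : ℕ}
    (hr : M.Reach Evens (EStr m) pre) (hst : (2*q) ∈ M.step (EStr m, pre))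
    (hmg : magicB k q = true) :
    true ∈ (redF M B n₀).fix (k, m, ([] : List Bool)) := by
  suffices H : ∀ N (pre : List Bool) (q : ℕ), pre.length ≤ N →
      M.Reach Evens (EStr m) pre → (2*q) ∈ M.step (EStr m, pre) → magicB k q = true →
      true ∈ (redF M B n₀).fix (k, m, ([] : List Bool)) from
    H pre.length pre q le_rfl hr hst hmg
  intro N
  induction N with
  | zero =>
    intro pre q hlen hr hst hmg
    by_cases hmin : ∃ pre' q', pre' <+: pre ∧ pre' ≠ pre ∧
        (2*q') ∈ M.step (EStr m, pre') ∧ magicB k q' = true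
    · obtain ⟨pre', q', hp, hne, -, -⟩ := hmin
      have hlt : pre'.length < pre.length :=
        lt_of_le_of_ne hp.length_le (fun h => hne (List.IsPrefix.eq_of_length hp h))
      omega
    · push_neg at hmin
      have hwalk := redF_walk (B := B) (n₀ := n₀) hr (fun pre' q' hp hne hs => by
        rw [← Bool.not_eq_true]
        exact hmin pre' q' hp hne hs)
      rw [hwalk]
      exact PFun.fix_stop (redF_mem_inl_true hst hmg)
  | succ N ihN =>
    intro pre q hlen hr hst hmg
    by_cases hmin : ∃ pre' q', pre' <+: pre ∧ pre' ≠ pre ∧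
        (2*q') ∈ M.step (EStr m, pre') ∧ magicB k q' = true
    · obtain ⟨pre', q', hp, hne, hs', hmg'⟩ := hmin
      have hlt : pre'.length < pre.length :=
        lt_of_le_of_ne hp.length_le (fun h => hne (List.IsPrefix.eq_of_length hp h))
      exact ihN pre' q' (by omega) (OMachine.reach_of_prefix hr hp) hs' hmg'
    · push_neg at hmin
      have hwalk := redF_walk (B := B) (n₀ := n₀) hr (fun pre' q' hp hne hs => by
        rw [← Bool.not_eq_true]
        exact hmin pre' q' hp hne hs)
      rw [hwalk]
      exact PFun.fix_stop (redF_mem_inl_true hst hmg)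

lemma redF_fix_false {k n₀ h₀ : ℕ}
    (hset : ∀ m, n₀ ≤ m → ∃ ans, M.Out Evens (EStr m) h₀ ans)
    (hdiv : ∀ q, magicB k q = false) :
    false ∈ (redF M B n₀).fix (k, n₀, ([] : List Bool)) := by
  suffices H : ∀ j m, n₀ ≤ m → m + j = n₀ + B k →
      false ∈ (redF M B n₀).fix (k, m, ([] : List Bool)) from
    H (B k) n₀ le_rfl rfl
  intro j
  induction j with
  | zero =>
    intro m hm hmj
    obtain ⟨ans, hout⟩ := hset m hm
    rw [redF_walk hout.1 (fun pre q _ _ _ => hdiv q)]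
    exact PFun.fix_stop (redF_mem_halt_stop hout.2 (by omega))
  | succ j ih =>
    intro m hm hmj
    obtain ⟨ans, hout⟩ := hset m hm
    rw [redF_walk hout.1 (fun pre q _ _ _ => hdiv q),
      PFun.fix_fwd_eq (redF_mem_halt_next hout.2 (by omega))]
    exact ih (m+1) (by omega) (by omega)

lemma redF_fix_true {k n₀ h₀ mstar : ℕ}
    (hset : ∀ m, n₀ ≤ m → ∃ ans, M.Out Evens (EStr m) h₀ ans)
    (hm1 : n₀ ≤ mstar) (hm2 : mstar ≤ n₀ + B k)
    (hdet : ∃ pre q, M.Reach Evens (EStr mstar) pre ∧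
      (2*q) ∈ M.step (EStr mstar, pre) ∧ magicB k q = true) :
    true ∈ (redF M B n₀).fix (k, n₀, ([] : List Bool)) := by
  suffices H : ∀ j m, n₀ ≤ m → m + j = mstar →
      true ∈ (redF M B n₀).fix (k, m, ([] : List Bool)) from
    H (mstar - n₀) n₀ le_rfl (by omega)
  intro j
  induction j with
  | zero =>
    intro m hm hmj
    obtain ⟨pre, q, hr, hs, hmg⟩ := hdet
    have hmeq : m = mstar := by omega
    subst hmeq
    exact redF_detect hr hs hmg
  | succ j ih =>
    intro m hm hmj
    by_cases hx : ∃ pre q, M.Reach Evens (EStr m) pre ∧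
        (2*q) ∈ M.step (EStr m, pre) ∧ magicB k q = true
    · obtain ⟨pre, q, hr, hs, hmg⟩ := hx
      exact redF_detect hr hs hmg
    · push_neg at hx
      obtain ⟨ans, hout⟩ := hset m hm
      have hnm : ∀ pre q, pre <+: ans → pre ≠ ans →
          (2*q) ∈ M.step (EStr m, pre) → magicB k q = false := by
        intro pre q hp _ hs
        rw [← Bool.not_eq_true]
        exact hx pre q (OMachine.reach_of_prefix hout.1 hp) hs
      rw [redF_walk hout.1 hnm,
        PFun.fix_fwd_eq (redF_mem_halt_next hout.2 (by omega))]
      exact ih (m+1) (by omega) (by omega)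

end RedFSemantics

end Stmt9Reduction
section Stmt9Computability

open Nat.Partrec (Code)
open Nat.Partrec.Code

lemma primrec_EStr : Primrec EStr := by
  have h : Primrec fun m => (List.range m).map (fun i => 2*i) :=
    Primrec.list_map Primrec.list_range
      ((Primrec.nat_mul.comp (Primrec.const 2) Primrec.snd).to₂)
  exact h.of_eq fun m => rfl

lemma primrec_magicB : Primrec₂ magicB := by
  have hodd : Primrec fun p : ℕ × ℕ => (p.2 % 2 == 1) :=
    Primrec.beq.comp (Primrec.nat_mod.comp Primrec.snd (Primrec.const 2)) (Primrec.const 1)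
  have hht : Primrec fun p : ℕ × ℕ => htB p.1 (p.2 / 2) :=
    primrec_htB.comp Primrec.fst (Primrec.nat_div.comp Primrec.snd (Primrec.const 2))
  have h3 : Primrec fun p : ℕ × ℕ => magicB p.1 p.2 :=
    (Primrec.cond hodd hht (Primrec.const false)).of_eq fun p => by
      cases h : (p.2 % 2 == 1) <;> simp [magicB, h]
  exact h3.to₂

lemma primrec_polyEval (p : Polynomial ℕ) : Primrec fun n => p.eval n := by
  induction p using Polynomial.induction_on' with
  | add f g hf hg => exact (Primrec.nat_add.comp hf hg).of_eq fun n => by simp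
  | monomial e a =>
    have hp : Primrec fun n : ℕ => n ^ e := by
      induction e with
      | zero => exact (Primrec.const 1).of_eq fun n => by simp
      | succ e ih =>
        refine (Primrec.nat_mul.comp ih Primrec.id).of_eq fun n => ?_
        simp [pow_succ]
    refine (Primrec.nat_mul.comp (Primrec.const a) hp).of_eq fun n => ?_
    simp [Polynomial.eval_monomial]

lemma poly_eval_mono (p : Polynomial ℕ) {a b : ℕ} (h : a ≤ b) : p.eval a ≤ p.eval b := by
  rw [Polynomial.eval_eq_sum_range, Polynomial.eval_eq_sum_range]
  exact Finset.sum_le_sum fun i _ => Nat.mul_le_mul_left _ (Nat.pow_le_pow_left h i)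

lemma partrec_redF (M : OMachine) {B : ℕ → ℕ} (hB : Primrec B) (n₀ : ℕ) :
    Partrec (redF M B n₀) := by
  have hpre : Computable fun s : ℕ × ℕ × List Bool => (EStr s.2.1, s.2.2) :=
    ((primrec_EStr.comp (Primrec.fst.comp Primrec.snd)).pair
      (Primrec.snd.comp Primrec.snd)).to_comp
  have hstep : Partrec fun s : ℕ × ℕ × List Bool => M.step (EStr s.2.1, s.2.2) :=
    M.partrec.comp hpre
  -- the post-processing function
  have hk : Primrec fun q : (ℕ × ℕ × List Bool) × ℕ => q.1.1 := Primrec.fst.comp Primrec.fst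
  have hm : Primrec fun q : (ℕ × ℕ × List Bool) × ℕ => q.1.2.1 :=
    Primrec.fst.comp (Primrec.snd.comp Primrec.fst)
  have hans : Primrec fun q : (ℕ × ℕ × List Bool) × ℕ => q.1.2.2 :=
    Primrec.snd.comp (Primrec.snd.comp Primrec.fst)
  have hv : Primrec fun q : (ℕ × ℕ × List Bool) × ℕ => q.2 := Primrec.snd
  have hc1 : Primrec fun q : (ℕ × ℕ × List Bool) × ℕ => (q.2 % 2 == 1) :=
    Primrec.beq.comp (Primrec.nat_mod.comp hv (Primrec.const 2)) (Primrec.const 1)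
  have hble : Primrec fun q : (ℕ × ℕ × List Bool) × ℕ => Nat.ble (n₀ + B q.1.1) q.1.2.1 := by
    have h0 : Primrec fun q : (ℕ × ℕ × List Bool) × ℕ =>
        decide (n₀ + B q.1.1 ≤ q.1.2.1) :=
      PrimrecPred.decide (Primrec.nat_le.comp (Primrec.nat_add.comp (Primrec.const n₀) (hB.comp hk)) hm)
    refine h0.of_eq fun q => ?_
    cases hb : Nat.ble (n₀ + B q.1.1) q.1.2.1 with
    | true => simp [show n₀ + B q.1.1 ≤ q.1.2.1 by simpa using hb]
    | false =>
      have hnot : ¬ (n₀ + B q.1.1 ≤ q.1.2.1) := by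
        intro hle
        have hb2 : Nat.ble (n₀ + B q.1.1) q.1.2.1 = true := by simpa using hle
        rw [hb] at hb2
        exact Bool.false_ne_true hb2
      simp [hnot]
  have hinrNext : Primrec fun q : (ℕ × ℕ × List Bool) × ℕ =>
      (Sum.inr (q.1.1, q.1.2.1 + 1, ([] : List Bool)) : Bool ⊕ (ℕ × ℕ × List Bool)) :=
    Primrec.sumInr.comp (hk.pair ((Primrec.succ.comp hm).pair (Primrec.const [])))
  have hbranchHalt : Primrec fun q : (ℕ × ℕ × List Bool) × ℕ =>
      (bif Nat.ble (n₀ + B q.1.1) q.1.2.1 then Sum.inl false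
       else Sum.inr (q.1.1, q.1.2.1 + 1, ([] : List Bool)) : Bool ⊕ (ℕ × ℕ × List Bool)) :=
    Primrec.cond hble (Primrec.const (Sum.inl false)) hinrNext
  have hq2 : Primrec fun q : (ℕ × ℕ × List Bool) × ℕ => q.2 / 2 :=
    Primrec.nat_div.comp hv (Primrec.const 2)
  have hmagic : Primrec fun q : (ℕ × ℕ × List Bool) × ℕ => magicB q.1.1 (q.2 / 2) :=
    primrec_magicB.comp hk hq2
  have hansApp : Primrec fun q : (ℕ × ℕ × List Bool) × ℕ =>
      q.1.2.2 ++ [((q.2 / 2) % 2 == 0)] :=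
    Primrec.list_concat.comp hans
      (Primrec.beq.comp (Primrec.nat_mod.comp hq2 (Primrec.const 2)) (Primrec.const 0))
  have hinrCont : Primrec fun q : (ℕ × ℕ × List Bool) × ℕ =>
      (Sum.inr (q.1.1, q.1.2.1, q.1.2.2 ++ [((q.2 / 2) % 2 == 0)]) :
        Bool ⊕ (ℕ × ℕ × List Bool)) :=
    Primrec.sumInr.comp (hk.pair (hm.pair hansApp))
  have hbranchQuery : Primrec fun q : (ℕ × ℕ × List Bool) × ℕ =>
      (bif magicB q.1.1 (q.2 / 2) then Sum.inl true
       else Sum.inr (q.1.1, q.1.2.1, q.1.2.2 ++ [((q.2 / 2) % 2 == 0)]) :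
        Bool ⊕ (ℕ × ℕ × List Bool)) :=
    Primrec.cond hmagic (Primrec.const (Sum.inl true)) hinrCont
  have hpost : Primrec fun q : (ℕ × ℕ × List Bool) × ℕ =>
      (bif q.2 % 2 == 1 then
        (bif Nat.ble (n₀ + B q.1.1) q.1.2.1 then Sum.inl false
         else Sum.inr (q.1.1, q.1.2.1 + 1, ([] : List Bool)))
       else bif magicB q.1.1 (q.2 / 2) then Sum.inl true
       else Sum.inr (q.1.1, q.1.2.1, q.1.2.2 ++ [((q.2 / 2) % 2 == 0)]) :
        Bool ⊕ (ℕ × ℕ × List Bool)) :=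
    Primrec.cond hc1 hbranchHalt hbranchQuery
  exact hstep.map hpost.to_comp.to₂

lemma not_computablePred_halts : ¬ ComputablePred Halts := by
  intro h
  apply ComputablePred.halting_problem 0
  obtain ⟨f, hf, hp⟩ := ComputablePred.computable_iff.1 h
  apply ComputablePred.computable_iff.2
  refine ⟨fun c => f (Encodable.encode c), hf.comp Computable.encode, funext fun c => ?_⟩
  have h1 : Halts (Encodable.encode c) = (f (Encodable.encode c) : Prop) := congrFun hp _
  rw [← h1]
  simp [Halts, Denumerable.ofNat_encode]

end Stmt9Computability
section Stmt9Final

/-- The constructed family is not PSD[O]-learnable. -/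
theorem fam_not_PSDO : ¬ PSDO Fam := by
  rintro ⟨M, p, hM⟩
  -- Run the learner on the canonical enumeration of `Evens`.
  have hEe : IsEnum (fun i => 2*i) Evens := by
    rw [IsEnum]
    ext x
    constructor
    · rintro ⟨i, rfl⟩
      exact mem_evens.2 (by show (2*i) % 2 = 0; omega)
    · intro hx
      rw [mem_evens] at hx
      exact ⟨x/2, by show 2*(x/2) = x; omega⟩
  obtain ⟨h₀, hF0, n₀, hset, -, -⟩ := hM Evens ⟨0, rfl⟩ _ hEe
  set B : ℕ → ℕ := fun k => p.eval (k+1) with hBdef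
  have hsetE : ∀ m, n₀ ≤ m → ∃ ans, M.Out Evens (EStr m) h₀ ans := fun m hm => hset m hm
  -- The would-be halting-problem decision procedure is correct:
  have hkey : ∀ k, (redF M B n₀).fix (k, n₀, ([] : List Bool)) =
      Part.some (decide (Halts k)) := by
    intro k
    by_cases hk : Halts k
    · -- `k` halts, say at time `t`; run the learner on `Evens ∪ {2t+1}`.
      obtain ⟨t, ht⟩ := halts_iff.1 hk
      have hFk : Fam.F (k+1) = Evens ∪ {2*t+1} := famF_succ_of_htAt ht
      have hmile : Fam.mi (Evens ∪ {2*t+1}) ≤ k + 1 :=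
        Nat.sInf_le (show (k+1) ∈ {n | Fam.F n = Evens ∪ {2*t+1}} from hFk)
      have hPB : p.eval (Fam.mi (Evens ∪ {2*t+1})) ≤ B k := poly_eval_mono p hmile
      set L : ℕ := n₀ + B k + 1 with hLdef
      set g : ℕ → ℕ := fun i => if i < L then 2*i else if i = L then 2*t+1 else 2*(i-1)
        with hgdef
      have hge : IsEnum g (Evens ∪ {2*t+1}) := by
        rw [IsEnum]
        ext x
        constructor
        · rintro ⟨i, rfl⟩
          simp only [hgdef]
          split_ifs with h1 h2
          · exact Or.inl (mem_evens.2 (by omega))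
          · exact Or.inr rfl
          · exact Or.inl (mem_evens.2 (by omega))
        · rintro (hxe | hxd)
          · rw [mem_evens] at hxe
            by_cases hxl : x/2 < L
            · refine ⟨x/2, ?_⟩
              simp only [hgdef]
              rw [if_pos hxl]
              omega
            · refine ⟨x/2 + 1, ?_⟩
              simp only [hgdef]
              split_ifs <;> omega
          · rw [Set.mem_singleton_iff] at hxd
            refine ⟨L, ?_⟩
            simp only [hgdef]
            split_ifs <;> omega
      obtain ⟨h', hFh', nL, hset', hcard', -⟩ := hM (Evens ∪ {2*t+1}) ⟨k+1, hFk⟩ g hge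
      have hginj : Function.Injective g := by
        intro a b hab
        simp only [hgdef] at hab
        split_ifs at hab <;> omega
      have hcardeq : (str g nL).toFinset.card = nL := by
        have hnd : (str g nL).Nodup := (List.nodup_range).map hginj
        rw [List.toFinset_card_of_nodup hnd]
        simp [str]
      have hnLP : nL < B k := by
        rw [← hcardeq]
        exact lt_of_lt_of_le hcard' hPB
      set mstar : ℕ := max n₀ nL with hmsdef
      have hm1 : n₀ ≤ mstar := le_max_left _ _
      have hm2 : mstar ≤ n₀ + B k := Nat.max_le.2 ⟨by omega, by omega⟩
      have hgE : str g mstar = EStr mstar := by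
        show (List.range mstar).map g = (List.range mstar).map (fun i => 2*i)
        apply List.map_congr_left
        intro i hi
        rw [List.mem_range] at hi
        simp only [hgdef]
        rw [if_pos (by omega)]
      obtain ⟨ans', hout'⟩ := hset' mstar (le_max_right _ _)
      rw [hgE] at hout'
      obtain ⟨ans, hout⟩ := hsetE mstar hm1
      have hne : h₀ ≠ h' := by
        intro he
        rw [he, hFh'] at hF0
        exact evens_ne_union hF0.symm
      have hAA' : ∀ x, x ≠ 2*t+1 → (x ∈ Evens ↔ x ∈ Evens ∪ {2*t+1}) := by
        intro x hx
        constructor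
        · exact fun h => Or.inl h
        · rintro (h | h)
          · exact h
          · exact absurd h hx
      obtain ⟨pre, hppre, hrpre, hstep⟩ := OMachine.queries_diff hAA' hout hout' hne
      have hmg : magicB k (2*t+1) = true := by
        simp only [magicB, Bool.and_eq_true, beq_iff_eq]
        refine ⟨by omega, ?_⟩
        have h2 : (2*t+1)/2 = t := by omega
        rw [h2]
        exact ht
      have htrue := redF_fix_true (B := B) hsetE hm1 hm2 ⟨pre, 2*t+1, hrpre, hstep, hmg⟩
      rw [Part.eq_some_iff]
      have hd : decide (Halts k) = true := by simp [hk]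
      rw [hd]
      exact htrue
    · have hdiv : ∀ q, magicB k q = false := by
        intro q
        cases hmq : magicB k q with
        | false => rfl
        | true => exact absurd (magicB_halts hmq) hk
      have hfalse := redF_fix_false (B := B) hsetE hdiv
      rw [Part.eq_some_iff]
      have hd : decide (Halts k) = false := by simp [hk]
      rw [hd]
      exact hfalse
  -- Hence the halting problem would be decidable.
  have hBpr : Primrec B := (primrec_polyEval p).comp Primrec.succ
  have hpart : Partrec fun k : ℕ => (redF M B n₀).fix (k, n₀, ([] : List Bool)) :=
    (partrec_redF M hBpr n₀).fix.comp
      (Computable.id.pair (Computable.const (n₀, ([] : List Bool))))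
  have hcompD : Computable fun k => decide (Halts k) := hpart.of_eq hkey
  exact not_computablePred_halts ⟨fun k => Classical.propDecidable _, hcompD⟩

/-- There is an indexed family which is PSD[T]-learnable but
not PSD[O]-learnable. -/
theorem stmt9 : ∃ 𝓕 : IndexedFamily, PSDT 𝓕 ∧ ¬ PSDO 𝓕 :=
  ⟨Fam, fam_PSDT, fam_not_PSDO⟩

end Stmt9Final

end TeachLearn
end
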